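/- arXiv:2304.14074 — 4 statements merged into one kernel-verified Lean document; each statement's English description precedes it below -/
import Mathlib

section
/- (Convergence of PA-III.) Let N ≥ 1 be an integer, u⁰ ∈ ℝ^m, and define the fine solution by U(T_0) = u⁰ and U(T_{n+1}) = P_{J_2}·U(T_n) for 0 ≤ n ≤ N−1. Let (U_n^k)_{0≤n≤N, k≥0} satisfy U_0^k = u⁰ for all k and U_{n+1}^{k+1} = P_1·U_n^{k+1} + (P_{J_2} − P_1)·U_n^k for 0 ≤ n ≤ N−1 and k ≥ 0. Set E_n^k = U(T_n) − U_n^k, α = ‖P_{J_2} − P_1‖ and β = ‖P_1‖ (so β < 1). Then for every k ≥ 0, max_{1≤j≤N} ‖E_j^{k+1}‖ ≤ α^{k+1} · min{ ((1 − β^{N−1})/(1 − β))^{k+1} , C(N−1, k+1) } · max_{1≤j≤N} ‖E_j^0‖, where C(·,·) denotes the binomial coefficient. -/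
/-- The m×m discrete Dirichlet Laplacian with mesh size `h`. -/
noncomputable def Dh (m : ℕ) (h : ℝ) : Matrix (Fin m) (Fin m) ℝ :=
  Matrix.of fun i j =>
    if (i : ℕ) = (j : ℕ) then 1 / h ^ 2 * (-2)
    else if (i : ℕ) + 1 = (j : ℕ) ∨ (j : ℕ) + 1 = (i : ℕ) then 1 / h ^ 2 * 1
    else 0

/-- `Pmat m h ΔT ε i = (I − iΔT·D_h + ε²ΔT·D_h²)⁻¹ (I − iΔT·D_h)`. -/
noncomputable def Pmat (m : ℕ) (h ΔT ε : ℝ) (i : ℕ) : Matrix (Fin m) (Fin m) ℝ :=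
  ((1 : Matrix (Fin m) (Fin m) ℝ) - ((i : ℝ) * ΔT) • Dh m h
      + (ε ^ 2 * ΔT) • Dh m h ^ 2)⁻¹
    * ((1 : Matrix (Fin m) (Fin m) ℝ) - ((i : ℝ) * ΔT) • Dh m h)

/-- `PJmat m h ΔT ε J i = [(I − (iΔT/J)·D_h + ε²(ΔT/J)·D_h²)⁻¹ (I − (iΔT/J)·D_h)]^J`. -/
noncomputable def PJmat (m : ℕ) (h ΔT ε : ℝ) (J i : ℕ) : Matrix (Fin m) (Fin m) ℝ :=
  (((1 : Matrix (Fin m) (Fin m) ℝ) - ((i : ℝ) * ΔT / (J : ℝ)) • Dh m h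
      + (ε ^ 2 * (ΔT / (J : ℝ))) • Dh m h ^ 2)⁻¹
    * ((1 : Matrix (Fin m) (Fin m) ℝ) - ((i : ℝ) * ΔT / (J : ℝ)) • Dh m h)) ^ J

/-- The action of a matrix on `EuclideanSpace ℝ (Fin m)` (i.e. `ℝ^m` with the
Euclidean norm), given by matrix-vector multiplication. -/
noncomputable def act {m : ℕ} (A : Matrix (Fin m) (Fin m) ℝ)
    (U : EuclideanSpace ℝ (Fin m)) : EuclideanSpace ℝ (Fin m) :=
  Matrix.toEuclideanCLM (𝕜 := ℝ) A U

/-- The operator (spectral) norm of a matrix, induced by the Euclidean norm. -/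
noncomputable def opNorm {m : ℕ} (A : Matrix (Fin m) (Fin m) ℝ) : ℝ :=
  ‖Matrix.toEuclideanCLM (𝕜 := ℝ) A‖

open Matrix Finset
open scoped RealInnerProductSpace

namespace Stmt14Aux

/-! ### The difference matrix and negative definiteness of `Dh` -/

/-- The (m+1)×m difference matrix. -/
noncomputable def Bmat (m : ℕ) : Matrix (Fin (m + 1)) (Fin m) ℝ :=
  Matrix.of fun k i => (if (k : ℕ) = (i : ℕ) then 1 else 0)
    - (if (k : ℕ) = (i : ℕ) + 1 then 1 else 0)

lemma ind_sum (m a b : ℕ) (ha : a ≤ m) :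
    ∑ k : Fin (m + 1), (if (k : ℕ) = a then (1 : ℝ) else 0) * (if (k : ℕ) = b then 1 else 0)
      = if a = b then 1 else 0 := by
  rw [Finset.sum_eq_single_of_mem (⟨a, Nat.lt_succ_of_le ha⟩ : Fin (m + 1)) (Finset.mem_univ _)]
  · simp
  · intro k _ hk
    have : (k : ℕ) ≠ a := fun hc => hk (Fin.ext hc)
    simp [this]

lemma BtB {m : ℕ} (i j : Fin m) : ((Bmat m)ᵀ * Bmat m) i j =
    (if (i : ℕ) = (j : ℕ) then 2
      else if (i : ℕ) + 1 = (j : ℕ) ∨ (j : ℕ) + 1 = (i : ℕ) then -1 else 0) := by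
  have hi : (i : ℕ) ≤ m := i.2.le
  have hi1 : (i : ℕ) + 1 ≤ m := i.2
  simp only [Matrix.mul_apply, Matrix.transpose_apply, Bmat, Matrix.of_apply, sub_mul, mul_sub]
  rw [Finset.sum_sub_distrib, Finset.sum_sub_distrib, Finset.sum_sub_distrib,
    ind_sum m i j hi, ind_sum m i ((j : ℕ) + 1) hi, ind_sum m ((i : ℕ) + 1) j hi1,
    ind_sum m ((i : ℕ) + 1) ((j : ℕ) + 1) hi1]
  split_ifs <;> first | omega | norm_num

lemma Dh_eq (m : ℕ) (h : ℝ) : Dh m h = (-(1 / h ^ 2)) • ((Bmat m)ᵀ * Bmat m) := by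
  ext i j
  rw [Matrix.smul_apply, BtB]
  simp only [Dh, Matrix.of_apply, smul_eq_mul]
  split_ifs <;> ring

lemma dot_BtB {m : ℕ} (w : Fin m → ℝ) :
    w ⬝ᵥ ((Bmat m)ᵀ * Bmat m).mulVec w = ((Bmat m).mulVec w) ⬝ᵥ ((Bmat m).mulVec w) := by
  rw [← Matrix.mulVec_mulVec, Matrix.dotProduct_mulVec, Matrix.vecMul_transpose]

lemma dot_Dh_nonpos {m : ℕ} (h : ℝ) (w : Fin m → ℝ) : w ⬝ᵥ (Dh m h).mulVec w ≤ 0 := by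
  rw [Dh_eq, Matrix.smul_mulVec, dotProduct_smul, dot_BtB, smul_eq_mul]
  have h1 : 0 ≤ ((Bmat m).mulVec w) ⬝ᵥ ((Bmat m).mulVec w) :=
    Finset.sum_nonneg fun i _ => mul_self_nonneg _
  have h2 : (0 : ℝ) ≤ 1 / h ^ 2 := by positivity
  nlinarith

lemma Bmat_mulVec_zero {m : ℕ} {w : Fin m → ℝ} (hw : (Bmat m).mulVec w = 0) : w = 0 := by
  have key : ∀ j (hj : j < m), w ⟨j, hj⟩ = 0 := by
    intro j
    induction j with
    | zero =>
      intro hj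
      have h0 := congrFun hw ⟨0, by omega⟩
      rw [Matrix.mulVec, dotProduct] at h0
      simp only [Pi.zero_apply] at h0
      rw [Finset.sum_eq_single_of_mem (⟨0, hj⟩ : Fin m) (Finset.mem_univ _)] at h0
      · simpa [Bmat] using h0
      · intro k _ hk
        have : (k : ℕ) ≠ 0 := fun hc => hk (Fin.ext hc)
        simp [Bmat, this, Ne.symm this]
    | succ j ih =>
      intro hj
      have hj' : j < m := by omega
      have h0 := congrFun hw ⟨j + 1, by omega⟩
      rw [Matrix.mulVec, dotProduct] at h0
      simp only [Pi.zero_apply] at h0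
      have hsub : ∑ i : Fin m, Bmat m ⟨j + 1, by omega⟩ i * w i
          = ∑ i ∈ ({⟨j, hj'⟩, ⟨j + 1, hj⟩} : Finset (Fin m)),
              Bmat m ⟨j + 1, by omega⟩ i * w i := by
        symm
        apply Finset.sum_subset (Finset.subset_univ _)
        intro i _ hi
        simp only [Finset.mem_insert, Finset.mem_singleton] at hi
        push_neg at hi
        have h1 : (i : ℕ) ≠ j := fun hc => hi.1 (Fin.ext hc)
        have h2 : (i : ℕ) ≠ j + 1 := fun hc => hi.2 (Fin.ext hc)
        have h3 : ¬ (j + 1 = (i : ℕ)) := fun hc => h2 hc.symm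
        have h4 : ¬ (j + 1 = (i : ℕ) + 1) := fun hc => h1 (by omega)
        simp [Bmat, h3, h4, Ne.symm h1]
      rw [hsub, Finset.sum_pair (by simp [Fin.ext_iff] : (⟨j, hj'⟩ : Fin m) ≠ ⟨j + 1, hj⟩)]
        at h0
      have e1 : Bmat m ⟨j + 1, by omega⟩ ⟨j, hj'⟩ = -1 := by
        simp [Bmat]
      have e2 : Bmat m ⟨j + 1, by omega⟩ ⟨j + 1, hj⟩ = 1 := by
        simp [Bmat]
      rw [e1, e2, ih hj'] at h0
      linarith
  funext i
  have := key i.1 i.2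
  simpa using this

lemma Dh_mulVec_inj {m : ℕ} {h : ℝ} (hh : 0 < h) {w : Fin m → ℝ}
    (hw : (Dh m h).mulVec w = 0) : w = 0 := by
  have h1 : w ⬝ᵥ (Dh m h).mulVec w = 0 := by rw [hw]; simp
  rw [Dh_eq, Matrix.smul_mulVec, dotProduct_smul, dot_BtB, smul_eq_mul] at h1
  have h2 : (0 : ℝ) < 1 / h ^ 2 := by positivity
  have h3 : ((Bmat m).mulVec w) ⬝ᵥ ((Bmat m).mulVec w) = 0 := by
    rcases mul_eq_zero.mp h1 with h1 | h1
    · exfalso; linarith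
    · exact h1
  exact Bmat_mulVec_zero (dotProduct_self_eq_zero.mp h3)

/-! ### Lemmas about `act` -/

variable {m : ℕ}

lemma act_eq (A : Matrix (Fin m) (Fin m) ℝ) (x : EuclideanSpace ℝ (Fin m)) :
    act A x = (WithLp.equiv 2 (Fin m → ℝ)).symm
      (A.mulVec (WithLp.equiv 2 (Fin m → ℝ) x)) := rfl

lemma inner_act (A : Matrix (Fin m) (Fin m) ℝ) (x y : EuclideanSpace ℝ (Fin m)) :
    ⟪x, act A y⟫
      = (WithLp.equiv 2 (Fin m → ℝ) x) ⬝ᵥ (A.mulVec (WithLp.equiv 2 (Fin m → ℝ) y)) := by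
  simp [act, PiLp.inner_apply, dotProduct, mul_comm]

lemma act_sym (A : Matrix (Fin m) (Fin m) ℝ) (hA : Aᵀ = A) (x y : EuclideanSpace ℝ (Fin m)) :
    ⟪act A x, y⟫ = ⟪x, act A y⟫ := by
  rw [real_inner_comm, inner_act, inner_act, Matrix.dotProduct_mulVec]
  have hv : (WithLp.equiv 2 (Fin m → ℝ) y) ᵥ* A = A *ᵥ (WithLp.equiv 2 (Fin m → ℝ) y) := by
    conv_lhs => rw [← hA, Matrix.vecMul_transpose]
  rw [hv, dotProduct_comm]

lemma act_mul (A B : Matrix (Fin m) (Fin m) ℝ) (x : EuclideanSpace ℝ (Fin m)) :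
    act (A * B) x = act A (act B x) := by
  simp [act, _root_.map_mul]

lemma act_one (x : EuclideanSpace ℝ (Fin m)) : act (1 : Matrix (Fin m) (Fin m) ℝ) x = x := by
  simp [act]

lemma act_add (A B : Matrix (Fin m) (Fin m) ℝ) (x : EuclideanSpace ℝ (Fin m)) :
    act (A + B) x = act A x + act B x := by
  simp [act, _root_.map_add]

lemma act_sub (A B : Matrix (Fin m) (Fin m) ℝ) (x : EuclideanSpace ℝ (Fin m)) :
    act (A - B) x = act A x - act B x := by
  simp [act, _root_.map_sub]

lemma act_map_sub (A : Matrix (Fin m) (Fin m) ℝ) (x y : EuclideanSpace ℝ (Fin m)) :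
    act A (x - y) = act A x - act A y := by
  simp [act, _root_.map_sub]

lemma act_smul (c : ℝ) (A : Matrix (Fin m) (Fin m) ℝ) (x : EuclideanSpace ℝ (Fin m)) :
    act (c • A) x = c • act A x := by
  simp [act, _root_.map_smul]

lemma act_zero' (A : Matrix (Fin m) (Fin m) ℝ) : act A (0 : EuclideanSpace ℝ (Fin m)) = 0 := by
  simp [act, _root_.map_zero]

lemma norm_act_le (A : Matrix (Fin m) (Fin m) ℝ) (x : EuclideanSpace ℝ (Fin m)) :
    ‖act A x‖ ≤ opNorm A * ‖x‖ :=
  (Matrix.toEuclideanCLM (𝕜 := ℝ) A).le_opNorm x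

/-! ### Operator norm less than one from pointwise contraction -/

lemma opNorm_lt_one (hm : 1 ≤ m)
    (T : EuclideanSpace ℝ (Fin m) →L[ℝ] EuclideanSpace ℝ (Fin m))
    (hT : ∀ x, x ≠ 0 → ‖T x‖ < ‖x‖) : ‖T‖ < 1 := by
  have hnt : Nontrivial (EuclideanSpace ℝ (Fin m)) := by
    refine ⟨EuclideanSpace.single ⟨0, hm⟩ (1 : ℝ), 0, fun hc => ?_⟩
    have := congrArg (fun v : EuclideanSpace ℝ (Fin m) => v ⟨0, hm⟩) hc
    simp [EuclideanSpace.single_apply] at this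
  obtain ⟨x₀, hx₀mem, hx₀max⟩ :=
    (isCompact_sphere (0 : EuclideanSpace ℝ (Fin m)) 1).exists_isMaxOn
      (NormedSpace.sphere_nonempty.mpr zero_le_one)
      (continuous_norm.comp T.continuous).continuousOn
  have hx₀ : ‖x₀‖ = 1 := by simpa using hx₀mem
  have hlt : ‖T x₀‖ < 1 := by
    have := hT x₀ (by intro hc; rw [hc, norm_zero] at hx₀; norm_num at hx₀)
    rwa [hx₀] at this
  refine lt_of_le_of_lt ?_ hlt
  apply T.opNorm_le_bound (norm_nonneg _)
  intro x
  rcases eq_or_ne x 0 with rfl | hx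
  · simp
  · have hxn : ‖x‖ ≠ 0 := norm_ne_zero_iff.mpr hx
    have hmem : (‖x‖⁻¹ • x) ∈ Metric.sphere (0 : EuclideanSpace ℝ (Fin m)) 1 := by
      simp [norm_smul, abs_of_nonneg (inv_nonneg.mpr (norm_nonneg x)),
        inv_mul_cancel₀ hxn]
    have hb := hx₀max hmem
    have h2 : ‖T x‖ = ‖x‖ * ‖T (‖x‖⁻¹ • x)‖ := by
      rw [T.map_smul, norm_smul, norm_inv, norm_norm]
      field_simp
    rw [h2, mul_comm (‖T x₀‖)]
    exact mul_le_mul_of_nonneg_left hb (norm_nonneg x)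

/-! ### The coarse propagator is a strict contraction -/

lemma P1_norm_lt_one {m : ℕ} (h ΔT ε : ℝ) (hh : 0 < h) (hΔT : 0 < ΔT) (hε : 0 < ε)
    (hm : 1 ≤ m) : opNorm (Pmat m h ΔT ε 1) < 1 := by
  set D : Matrix (Fin m) (Fin m) ℝ := Dh m h with hD
  have hDsym : Dᵀ = D := by
    ext i j
    simp only [hD, Dh, Matrix.transpose_apply, Matrix.of_apply]
    split_ifs <;> first | rfl | omega
  set R : Matrix (Fin m) (Fin m) ℝ := 1 - ΔT • D with hR
  set Q : Matrix (Fin m) (Fin m) ℝ := R + (ε ^ 2 * ΔT) • D ^ 2 with hQ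
  have hPmat : Pmat m h ΔT ε 1 = Q⁻¹ * R := by
    simp only [Pmat, hQ, hR, Nat.cast_one, one_mul, hD]
  -- dot product identities
  have hdotR : ∀ w : Fin m → ℝ, w ⬝ᵥ R.mulVec w = w ⬝ᵥ w - ΔT * (w ⬝ᵥ D.mulVec w) := by
    intro w
    rw [hR, Matrix.sub_mulVec, Matrix.smul_mulVec, Matrix.one_mulVec,
      dotProduct_sub, dotProduct_smul, smul_eq_mul]
  have hdotQ : ∀ w : Fin m → ℝ, w ⬝ᵥ Q.mulVec w
      = w ⬝ᵥ R.mulVec w + (ε ^ 2 * ΔT) * ((D.mulVec w) ⬝ᵥ (D.mulVec w)) := by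
    intro w
    rw [hQ, Matrix.add_mulVec, dotProduct_add, Matrix.smul_mulVec,
      dotProduct_smul, smul_eq_mul]
    congr 2
    rw [pow_two, ← Matrix.mulVec_mulVec, Matrix.dotProduct_mulVec]
    have hv : w ᵥ* D = D *ᵥ w := by
      conv_lhs => rw [← hDsym, Matrix.vecMul_transpose]
    rw [hv]
  have hself : ∀ w : Fin m → ℝ, 0 ≤ w ⬝ᵥ w :=
    fun w => Finset.sum_nonneg fun i _ => mul_self_nonneg _
  -- invertibility of R
  have hRinj : ∀ w : Fin m → ℝ, R.mulVec w = 0 → w = 0 := by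
    intro w hw
    have h1 : w ⬝ᵥ R.mulVec w = 0 := by rw [hw]; simp
    rw [hdotR] at h1
    have h2 := dot_Dh_nonpos (m := m) h w
    rw [← hD] at h2
    have h3 : w ⬝ᵥ w = 0 := by nlinarith [hself w]
    exact dotProduct_self_eq_zero.mp h3
  have hRunit : IsUnit R := by
    rw [← Matrix.mulVec_injective_iff_isUnit]
    intro a b hab
    have : R.mulVec (a - b) = 0 := by
      rw [Matrix.mulVec_sub, hab, sub_self]
    have := hRinj _ this
    exact sub_eq_zero.mp this
  have hRdet : IsUnit R.det := (Matrix.isUnit_iff_isUnit_det R).mp hRunit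
  -- invertibility of Q
  have hQinj : ∀ w : Fin m → ℝ, Q.mulVec w = 0 → w = 0 := by
    intro w hw
    have h1 : w ⬝ᵥ Q.mulVec w = 0 := by rw [hw]; simp
    rw [hdotQ, hdotR] at h1
    have h2 := dot_Dh_nonpos (m := m) h w
    rw [← hD] at h2
    have h4 := hself (D.mulVec w)
    have p1 : ΔT * (w ⬝ᵥ D.mulVec w) ≤ 0 := mul_nonpos_of_nonneg_of_nonpos hΔT.le h2
    have p2 : 0 ≤ ε ^ 2 * ΔT * ((D.mulVec w) ⬝ᵥ (D.mulVec w)) :=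
      mul_nonneg (by positivity) h4
    have h3 : w ⬝ᵥ w = 0 := le_antisymm (by linarith) (hself w)
    exact dotProduct_self_eq_zero.mp h3
  have hQunit : IsUnit Q := by
    rw [← Matrix.mulVec_injective_iff_isUnit]
    intro a b hab
    have : Q.mulVec (a - b) = 0 := by
      rw [Matrix.mulVec_sub, hab, sub_self]
    exact sub_eq_zero.mp (hQinj _ this)
  have hQdet : IsUnit Q.det := (Matrix.isUnit_iff_isUnit_det Q).mp hQunit
  have hQP : Q * (Q⁻¹ * R) = R := by
    rw [← mul_assoc, Matrix.mul_nonsing_inv _ hQdet, one_mul]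
  -- symmetry of R
  have hRsym : Rᵀ = R := by
    rw [hR, Matrix.transpose_sub, Matrix.transpose_one, Matrix.transpose_smul, hDsym]
  -- negativity and injectivity at the act level
  have hneg : ∀ v : EuclideanSpace ℝ (Fin m), ⟪v, act D v⟫ ≤ 0 := by
    intro v
    rw [inner_act]
    have := dot_Dh_nonpos (m := m) h (WithLp.equiv 2 (Fin m → ℝ) v)
    rwa [← hD] at this
  have hDinj : ∀ v : EuclideanSpace ℝ (Fin m), act D v = 0 → v = 0 := by
    intro v hv
    have h1 : D.mulVec (WithLp.equiv 2 (Fin m → ℝ) v) = 0 := by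
      have := congrArg (WithLp.equiv 2 (Fin m → ℝ)) hv
      simpa [act_eq] using this
    have h2 : (WithLp.equiv 2 (Fin m → ℝ) v) = 0 := by
      rw [hD] at h1
      exact Dh_mulVec_inj hh h1
    simpa using congrArg (WithLp.equiv 2 (Fin m → ℝ)).symm h2
  -- the contraction
  rw [show opNorm (Pmat m h ΔT ε 1) = ‖Matrix.toEuclideanCLM (𝕜 := ℝ) (Pmat m h ΔT ε 1)‖
    from rfl]
  apply opNorm_lt_one hm
  intro x hx
  show ‖act (Pmat m h ΔT ε 1) x‖ < ‖x‖
  rw [hPmat]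
  set z : EuclideanSpace ℝ (Fin m) := act (Q⁻¹ * R) x with hz
  rcases eq_or_ne z 0 with hz0 | hz0
  · rw [hz0, norm_zero]
    exact norm_pos_iff.mpr hx
  · set w : EuclideanSpace ℝ (Fin m) := act R⁻¹ z with hw
    have hRw : act R w = z := by
      rw [hw, ← act_mul, Matrix.mul_nonsing_inv _ hRdet, act_one]
    have hwne : w ≠ 0 := by
      intro hc
      apply hz0
      rw [← hRw, hc, act_zero']
    have hQz : act Q z = act R x := by
      rw [hz, ← act_mul, hQP]
    have hDw : act D w ≠ 0 := fun hc => hwne (hDinj w hc)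
    -- compute ⟪z, x⟫
    have key1 : ⟪w, act Q z⟫ = ⟪z, x⟫ := by
      rw [hQz, ← act_sym R hRsym, hRw]
    have key2 : ⟪w, act Q z⟫
        = ‖z‖ ^ 2 + (ε ^ 2 * ΔT) * ‖act D w‖ ^ 2
          - (ε ^ 2 * ΔT * ΔT) * ⟪act D w, act D (act D w)⟫ := by
      have hQsplit : act Q z = act R z + act ((ε ^ 2 * ΔT) • D ^ 2) z := by
        rw [hQ, act_add]
      rw [hQsplit, inner_add_right]
      have t1 : ⟪w, act R z⟫ = ‖z‖ ^ 2 := by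
        rw [← act_sym R hRsym, hRw, real_inner_self_eq_norm_sq]
      have hBR : ((ε ^ 2 * ΔT) • D ^ 2) * R
          = (ε ^ 2 * ΔT) • D ^ 2 - (ε ^ 2 * ΔT * ΔT) • (D ^ 2 * D) := by
        rw [hR, mul_sub, mul_one, Matrix.mul_smul, Matrix.smul_mul, smul_smul,
          mul_comm ΔT (ε ^ 2 * ΔT)]
      have t2 : act ((ε ^ 2 * ΔT) • D ^ 2) z
          = (ε ^ 2 * ΔT) • act (D ^ 2) w - (ε ^ 2 * ΔT * ΔT) • act (D ^ 2 * D) w := by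
        rw [← hRw, ← act_mul, hBR, act_sub, act_smul, act_smul]
      rw [t2, inner_sub_right, real_inner_smul_right, real_inner_smul_right]
      have t3 : ⟪w, act (D ^ 2) w⟫ = ‖act D w‖ ^ 2 := by
        rw [pow_two, act_mul, ← act_sym D hDsym, real_inner_self_eq_norm_sq]
      have t4 : ⟪w, act (D ^ 2 * D) w⟫ = ⟪act D w, act D (act D w)⟫ := by
        rw [act_mul, pow_two, act_mul, ← act_sym D hDsym]
      rw [t1, t3, t4]
      ring
    have hzx : ‖z‖ ^ 2 < ⟪z, x⟫ := by
      have h1 : ⟪act D w, act D (act D w)⟫ ≤ 0 := hneg (act D w)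
      have h2 : 0 < ‖act D w‖ := norm_pos_iff.mpr hDw
      have e3 : ⟪z, x⟫ = ‖z‖ ^ 2 + (ε ^ 2 * ΔT) * ‖act D w‖ ^ 2
          - (ε ^ 2 * ΔT * ΔT) * ⟪act D w, act D (act D w)⟫ := by
        rw [← key1, key2]
      have p1 : 0 < ε ^ 2 * ΔT * ‖act D w‖ ^ 2 :=
        mul_pos (mul_pos (pow_pos hε 2) hΔT) (pow_pos h2 2)
      have p2 : ε ^ 2 * ΔT * ΔT * ⟪act D w, act D (act D w)⟫ ≤ 0 :=
        mul_nonpos_of_nonneg_of_nonpos (by positivity) h1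
      linarith
    have hzn : 0 < ‖z‖ := norm_pos_iff.mpr hz0
    have hub : ⟪z, x⟫ ≤ ‖z‖ * ‖x‖ := real_inner_le_norm z x
    have h5 : ‖z‖ * ‖z‖ < ‖z‖ * ‖x‖ := by nlinarith
    exact lt_of_mul_lt_mul_left h5 hzn.le
/-! ### The combinatorial estimate -/

lemma combinat {N : ℕ} (hN : 1 ≤ N) (α β : ℝ) (hα : 0 ≤ α) (hβ0 : 0 ≤ β) (hβ1 : β < 1)
    (e : ℕ → ℕ → ℝ) (hpos : ∀ n k, 0 ≤ e n k) (he0 : ∀ k, e 0 k = 0)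
    (hrec : ∀ n < N, ∀ k, e (n + 1) (k + 1) ≤ β * e n (k + 1) + α * e n k) :
    ∀ k, ((Finset.Icc 1 N).sup' (Finset.nonempty_Icc.mpr hN) fun j => e j (k + 1)) ≤
      α ^ (k + 1) * min (((1 - β ^ (N - 1)) / (1 - β)) ^ (k + 1)) ((N - 1).choose (k + 1) : ℝ) *
      ((Finset.Icc 1 N).sup' (Finset.nonempty_Icc.mpr hN) fun j => e j 0) := by
  have hβne : β ≠ 1 := ne_of_lt hβ1
  obtain ⟨M, hM⟩ : ∃ M : ℕ → ℝ, ∀ k, M k =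
      (Finset.Icc 1 N).sup' (Finset.nonempty_Icc.mpr hN) fun j => e j k :=
    ⟨_, fun _ => rfl⟩
  have hMle : ∀ k n, 1 ≤ n → n ≤ N → e n k ≤ M k := fun k n h1 h2 => by
    rw [hM k]
    exact Finset.le_sup' (fun j => e j k) (Finset.mem_Icc.mpr ⟨h1, h2⟩)
  have hM0 : ∀ k, 0 ≤ M k := fun k => le_trans (hpos 1 k) (hMle k 1 le_rfl hN)
  set G : ℝ := (1 - β ^ (N - 1)) / (1 - β) with hG
  have hGsum : ∑ i ∈ Finset.range (N - 1), β ^ i = G := by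
    rw [geom_sum_eq hβne, hG, div_eq_div_iff (by linarith) (by linarith)]
    ring
  have hG0 : 0 ≤ G := by
    rw [← hGsum]
    exact Finset.sum_nonneg fun i _ => pow_nonneg hβ0 i
  -- bound A : geometric
  have stepA : ∀ k n, 1 ≤ n → n ≤ N →
      e n (k + 1) ≤ α * (∑ i ∈ Finset.range (n - 1), β ^ i) * M k := by
    intro k n
    induction n with
    | zero => omega
    | succ n ih =>
      intro _ hnN
      rcases Nat.eq_zero_or_pos n with rfl | hn
      · have h1 := hrec 0 (by omega) k
        simp only [he0] at h1
        simpa using h1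
      · have h1 := hrec n (by omega) k
        have h2 := ih hn (by omega)
        have h3 := hMle k n hn (by omega)
        have hsum : (∑ i ∈ Finset.range n, β ^ i)
            = β * (∑ i ∈ Finset.range (n - 1), β ^ i) + 1 := by
          conv_lhs => rw [show n = (n - 1) + 1 by omega]
          rw [geom_sum_succ]
        have hstep : e (n + 1) (k + 1) ≤ α * (∑ i ∈ Finset.range n, β ^ i) * M k := by
          calc e (n + 1) (k + 1) ≤ β * e n (k + 1) + α * e n k := h1
            _ ≤ β * (α * (∑ i ∈ Finset.range (n - 1), β ^ i) * M k) + α * M k :=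
                add_le_add (mul_le_mul_of_nonneg_left h2 hβ0)
                  (mul_le_mul_of_nonneg_left h3 hα)
            _ = α * (β * (∑ i ∈ Finset.range (n - 1), β ^ i) + 1) * M k := by ring
            _ = α * (∑ i ∈ Finset.range n, β ^ i) * M k := by rw [hsum]
        simpa using hstep
  have boundA : ∀ k, M (k + 1) ≤ (α * G) * M k := by
    intro k
    rw [hM (k + 1)]
    apply Finset.sup'_le
    intro j hj
    rw [Finset.mem_Icc] at hj
    calc e j (k + 1) ≤ α * (∑ i ∈ Finset.range (j - 1), β ^ i) * M k :=
          stepA k j hj.1 hj.2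
      _ ≤ α * (∑ i ∈ Finset.range (N - 1), β ^ i) * M k := by
          apply mul_le_mul_of_nonneg_right _ (hM0 k)
          apply mul_le_mul_of_nonneg_left _ hα
          exact Finset.sum_le_sum_of_subset_of_nonneg
            (Finset.range_subset_range.mpr (by omega)) (fun i _ _ => pow_nonneg hβ0 i)
      _ = (α * G) * M k := by rw [hGsum]
  have iterA : ∀ k, M (k + 1) ≤ (α * G) ^ (k + 1) * M 0 := by
    intro k
    induction k with
    | zero => simpa using boundA 0
    | succ k ih =>
      calc M (k + 2) ≤ (α * G) * M (k + 1) := boundA (k + 1)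
        _ ≤ (α * G) * ((α * G) ^ (k + 1) * M 0) :=
            mul_le_mul_of_nonneg_left ih (mul_nonneg hα hG0)
        _ = (α * G) ^ (k + 2) * M 0 := by ring
  -- bound B : binomial
  have stepB : ∀ k n, 1 ≤ n → n ≤ N → e n k ≤ α ^ k * ((n - 1).choose k : ℝ) * M 0 := by
    intro k
    induction k with
    | zero =>
      intro n h1 h2
      simpa using hMle 0 n h1 h2
    | succ k ihk =>
      intro n
      induction n with
      | zero => omega
      | succ n ihn =>
        intro _ hnN
        rcases Nat.eq_zero_or_pos n with rfl | hn
        · have h1 := hrec 0 (by omega) k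
          simp only [he0] at h1
          have h2 : e 1 (k + 1) ≤ 0 := by simpa using h1
          have h3 : (0:ℝ) ≤ α ^ (k + 1) * ((1 - 1).choose (k + 1) : ℝ) * M 0 := by
            apply mul_nonneg (mul_nonneg (pow_nonneg hα _) (Nat.cast_nonneg _)) (hM0 0)
          linarith
        · have h1 := hrec n (by omega) k
          have h2 := ihn hn (by omega)
          have h3 := ihk n hn (by omega)
          have hpascal : (((n - 1).choose (k + 1) : ℝ) + ((n - 1).choose k : ℝ))
              = (n.choose (k + 1) : ℝ) := by
            rw [← Nat.cast_add]
            congr 1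
            conv_rhs => rw [show n = (n - 1) + 1 by omega]
            rw [Nat.choose_succ_succ' (n - 1) k]
            omega
          have hstep : e (n + 1) (k + 1) ≤ α ^ (k + 1) * (n.choose (k + 1) : ℝ) * M 0 := by
            calc e (n + 1) (k + 1) ≤ β * e n (k + 1) + α * e n k := h1
              _ ≤ 1 * (α ^ (k + 1) * ((n - 1).choose (k + 1) : ℝ) * M 0)
                    + α * (α ^ k * ((n - 1).choose k : ℝ) * M 0) :=
                  add_le_add
                    (mul_le_mul hβ1.le h2 (hpos n (k + 1))
                      (by positivity))
                    (mul_le_mul_of_nonneg_left h3 hα)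
              _ = α ^ (k + 1) * (((n - 1).choose (k + 1) : ℝ) + ((n - 1).choose k : ℝ)) * M 0 := by
                  ring
              _ = α ^ (k + 1) * (n.choose (k + 1) : ℝ) * M 0 := by rw [hpascal]
          simpa using hstep
  have boundB : ∀ k, M (k + 1) ≤ α ^ (k + 1) * ((N - 1).choose (k + 1) : ℝ) * M 0 := by
    intro k
    rw [hM (k + 1)]
    apply Finset.sup'_le
    intro j hj
    rw [Finset.mem_Icc] at hj
    calc e j (k + 1) ≤ α ^ (k + 1) * ((j - 1).choose (k + 1) : ℝ) * M 0 :=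
          stepB (k + 1) j hj.1 hj.2
      _ ≤ α ^ (k + 1) * ((N - 1).choose (k + 1) : ℝ) * M 0 := by
          apply mul_le_mul_of_nonneg_right _ (hM0 0)
          apply mul_le_mul_of_nonneg_left _ (pow_nonneg hα _)
          exact_mod_cast Nat.choose_le_choose (k + 1) (by omega : j - 1 ≤ N - 1)
  intro k
  rw [← hM (k + 1), ← hM 0]
  rcases min_choice (G ^ (k + 1)) (((N - 1).choose (k + 1) : ℝ)) with hmin | hmin
  · rw [hmin]
    calc M (k + 1) ≤ (α * G) ^ (k + 1) * M 0 := iterA k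
      _ = α ^ (k + 1) * G ^ (k + 1) * M 0 := by rw [mul_pow]
  · rw [hmin]
    exact boundB k

end Stmt14Aux

theorem stmt14 (h ΔT ε : ℝ) (hh : 0 < h) (hΔT : 0 < ΔT) (hε : 0 < ε)
    (m : ℕ) (hm : 1 ≤ m) (J : ℕ) (hJ : 2 ≤ J)
    (N : ℕ) (hN : 1 ≤ N)
    (u0 : EuclideanSpace ℝ (Fin m))
    (Uf : ℕ → EuclideanSpace ℝ (Fin m)) (U : ℕ → ℕ → EuclideanSpace ℝ (Fin m))
    (hUf0 : Uf 0 = u0)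
    (hUfrec : ∀ n < N, Uf (n + 1) = act (PJmat m h ΔT ε J 2) (Uf n))
    (h0 : ∀ k, U 0 k = u0)
    (hrec : ∀ n < N, ∀ k, U (n + 1) (k + 1) =
      act (Pmat m h ΔT ε 1) (U n (k + 1))
        + act (PJmat m h ΔT ε J 2 - Pmat m h ΔT ε 1) (U n k)) :
    ∀ k : ℕ,
      ((Finset.Icc 1 N).sup' (Finset.nonempty_Icc.mpr hN)
          fun j => ‖Uf j - U j (k + 1)‖) ≤
        opNorm (PJmat m h ΔT ε J 2 - Pmat m h ΔT ε 1) ^ (k + 1) *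
          min (((1 - opNorm (Pmat m h ΔT ε 1) ^ (N - 1)) /
                  (1 - opNorm (Pmat m h ΔT ε 1))) ^ (k + 1))
              ((N - 1).choose (k + 1) : ℝ) *
          ((Finset.Icc 1 N).sup' (Finset.nonempty_Icc.mpr hN)
            fun j => ‖Uf j - U j 0‖) := by
  have hβ1 : opNorm (Pmat m h ΔT ε 1) < 1 := Stmt14Aux.P1_norm_lt_one h ΔT ε hh hΔT hε hm
  have he0 : ∀ k, ‖Uf 0 - U 0 k‖ = 0 := fun k => by
    rw [hUf0, h0, sub_self, norm_zero]
  have herec : ∀ n < N, ∀ k, ‖Uf (n + 1) - U (n + 1) (k + 1)‖ ≤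
      opNorm (Pmat m h ΔT ε 1) * ‖Uf n - U n (k + 1)‖
        + opNorm (PJmat m h ΔT ε J 2 - Pmat m h ΔT ε 1) * ‖Uf n - U n k‖ := by
    intro n hn k
    have hid : Uf (n + 1) - U (n + 1) (k + 1)
        = act (Pmat m h ΔT ε 1) (Uf n - U n (k + 1))
          + act (PJmat m h ΔT ε J 2 - Pmat m h ΔT ε 1) (Uf n - U n k) := by
      rw [hUfrec n hn, hrec n hn k]
      simp only [Stmt14Aux.act_sub, Stmt14Aux.act_map_sub]
      abel
    rw [hid]
    exact le_trans (norm_add_le _ _)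
      (add_le_add (Stmt14Aux.norm_act_le _ _) (Stmt14Aux.norm_act_le _ _))
  exact Stmt14Aux.combinat hN
    (opNorm (PJmat m h ΔT ε J 2 - Pmat m h ΔT ε 1)) (opNorm (Pmat m h ΔT ε 1))
    (norm_nonneg _) (norm_nonneg _) hβ1 (fun n k => ‖Uf n - U n k‖)
    (fun n k => norm_nonneg _) he0 herec
end

section
/- (Stability of NPA-I.) Let ℱ : ℝ^m → ℝ^m be a map and C ≥ 0 a constant such that ‖ℱ(U) − P_1·U‖ ≤ C·ΔT²·‖U‖ for every U ∈ ℝ^m (local-truncation-error difference between the nonlinear fine propagator and the linear coarse propagator 𝒢(U) = P_1·U). Let u⁰ ∈ ℝ^m and let (U_n^k)_{n,k≥0} satisfy U_0^k = u⁰ for all k and U_{n+1}^{k+1} = P_1·U_n^{k+1} + ℱ(U_n^k) − P_1·U_n^k for all n, k ≥ 0. Then for every n and k, ‖U_{n+1}^{k+1}‖ ≤ ‖u⁰‖ + C·(n+1)·ΔT²·max_{0≤j≤n} ‖U_j^k‖. -/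
open Matrix Polynomial

lemma Dh_transpose (m : ℕ) (h : ℝ) : (Dh m h)ᵀ = Dh m h := by
  ext i j
  simp only [Dh, transpose_apply, of_apply]
  by_cases h1 : (i:ℕ) = (j:ℕ)
  · simp [h1]
  · simp only [h1, Ne.symm h1, if_false, or_comm]

lemma Dh_conjTranspose (m : ℕ) (h : ℝ) : (Dh m h)ᴴ = Dh m h := by
  rw [conjTranspose, Dh_transpose]; ext i j; simp

noncomputable def Bmat (m : ℕ) (h : ℝ) : Matrix (Fin (m+1)) (Fin m) ℝ :=
  Matrix.of fun i j => (1/h) * ((if i = j.castSucc then 1 else 0) - (if i = j.succ then 1 else 0))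

lemma BtB (m : ℕ) {h : ℝ} (hh : 0 < h) : (Bmat m h)ᴴ * (Bmat m h) = -(Dh m h) := by
  ext j k
  simp only [conjTranspose_apply, mul_apply, Bmat, of_apply, star_trivial]
  have expand : ∀ i : Fin (m+1),
      ((1/h) * ((if i = j.castSucc then (1:ℝ) else 0) - (if i = j.succ then 1 else 0))) *
      ((1/h) * ((if i = k.castSucc then (1:ℝ) else 0) - (if i = k.succ then 1 else 0)))
      = (1/h) * (1/h) *
        ((if i = j.castSucc then (1:ℝ) else 0) * (if i = k.castSucc then 1 else 0)
         - (if i = j.castSucc then (1:ℝ) else 0) * (if i = k.succ then 1 else 0)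
         - (if i = j.succ then (1:ℝ) else 0) * (if i = k.castSucc then 1 else 0)
         + (if i = j.succ then (1:ℝ) else 0) * (if i = k.succ then 1 else 0)) := by
    intro i; ring
  rw [Finset.sum_congr rfl fun i _ => expand i, ← Finset.mul_sum]
  have delta : ∀ (a b : Fin (m+1)),
      (∑ i : Fin (m+1), (if i = a then (1:ℝ) else 0) * (if i = b then 1 else 0))
      = if a = b then 1 else 0 := by
    intro a b
    simp [ite_mul, Finset.sum_ite_eq', eq_comm]
  simp only [Finset.sum_add_distrib, Finset.sum_sub_distrib, delta]
  have c1 : (j.castSucc = k.castSucc) ↔ ((j:ℕ) = (k:ℕ)) := by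
    rw [Fin.ext_iff]; simp
  have c2 : (j.castSucc = k.succ) ↔ ((j:ℕ) = (k:ℕ)+1) := by
    rw [Fin.ext_iff]; simp
  have c3 : (j.succ = k.castSucc) ↔ ((j:ℕ)+1 = (k:ℕ)) := by
    rw [Fin.ext_iff]; simp
  have c4 : (j.succ = k.succ) ↔ ((j:ℕ) = (k:ℕ)) := by
    rw [Fin.ext_iff]; simp
  simp only [c1, c2, c3, c4, Dh, Matrix.neg_apply, of_apply]
  have hne : h ≠ 0 := ne_of_gt hh
  by_cases e1 : (j:ℕ) = (k:ℕ)
  · have e2 : ¬ ((j:ℕ) = (k:ℕ)+1) := by omega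
    have e3 : ¬ ((j:ℕ)+1 = (k:ℕ)) := by omega
    simp only [e1, e2, e3, if_true, if_false]
    field_simp; simp; norm_num
  · by_cases e2 : (j:ℕ) = (k:ℕ)+1
    · have e3 : ¬ ((j:ℕ)+1 = (k:ℕ)) := by omega
      have e4 : (j:ℕ)+1 = (k:ℕ) ∨ (k:ℕ)+1 = (j:ℕ) := by omega
      have e5 : ¬ ((k:ℕ)+1+1 = (k:ℕ)) := by omega
      simp only [e1, e2, e3, e4, e5, if_true, if_false]
      field_simp
      simp [hne]
    · by_cases e3 : (j:ℕ)+1 = (k:ℕ)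
      · have e4 : (j:ℕ)+1 = (k:ℕ) ∨ (k:ℕ)+1 = (j:ℕ) := by omega
        simp only [e1, e2, e3, e4, if_true, if_false]
        field_simp
        simp [hne]
      · have e4 : ¬ ((j:ℕ)+1 = (k:ℕ) ∨ (k:ℕ)+1 = (j:ℕ)) := by omega
        have e5 : ¬ (False ∨ (k:ℕ) + 1 = (j:ℕ)) := by
          rintro (h5 | h5)
          · exact h5
          · omega
        simp only [e1, e2, e3, e4, if_false]
        rw [if_neg e5]
        ring

lemma negDh_posSemidef (m : ℕ) {h : ℝ} (hh : 0 < h) : (-(Dh m h)).PosSemidef := by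
  rw [← BtB m hh]; exact posSemidef_conjTranspose_mul_self _

lemma smul_posSemidef {n : ℕ} {A : Matrix (Fin n) (Fin n) ℝ} (hA : A.PosSemidef)
    {c : ℝ} (hc : 0 ≤ c) : (c • A).PosSemidef := by
  refine .of_dotProduct_mulVec_nonneg ?_ ?_
  · show (c • A)ᴴ = c • A
    rw [conjTranspose_smul, hA.1.eq]; simp
  · intro x
    have := hA.dotProduct_mulVec_nonneg x
    simp only [smul_mulVec, dotProduct_smul, smul_eq_mul]
    exact mul_nonneg hc this

lemma DhSq_posSemidef (m : ℕ) (h : ℝ) : (Dh m h * Dh m h).PosSemidef := by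
  have := posSemidef_conjTranspose_mul_self (Dh m h)
  rwa [Dh_conjTranspose] at this

lemma norm_act_Pmat_le {m : ℕ} (h ΔT ε : ℝ) (hh : 0 < h) (hΔT : 0 < ΔT) (hε : 0 < ε)
    (x : EuclideanSpace ℝ (Fin m)) : ‖act (Pmat m h ΔT ε 1) x‖ ≤ ‖x‖ := by
  classical
  set D := Dh m h with hD
  set a := ΔT with ha
  set c := ε ^ 2 * ΔT with hc
  have hc0 : 0 < c := mul_pos (pow_pos hε 2) hΔT
  set N : Matrix (Fin m) (Fin m) ℝ := 1 - a • D with hN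
  set M : Matrix (Fin m) (Fin m) ℝ := 1 - a • D + c • D ^ 2 with hM
  have hPmat : Pmat m h ΔT ε 1 = M⁻¹ * N := by
    simp only [Pmat, Nat.cast_one, one_mul, ← hD, ← ha, ← hc, ← hN, ← hM]
    rfl
  set pN : ℝ[X] := 1 - C a * X with hpN
  set pM : ℝ[X] := 1 - C a * X + C c * X ^ 2 with hpM
  set pS : ℝ[X] := C 2 - C (2 * a) * X + C c * X ^ 2 with hpS
  have haevalN : aeval D pN = N := by
    simp [hpN, hN, Algebra.algebraMap_eq_smul_one, smul_mul_assoc]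
  have haevalM : aeval D pM = M := by
    simp [hpM, hM, hN, Algebra.algebraMap_eq_smul_one, smul_mul_assoc]
  have hpoly : pM * pM - pN * pN = C c * (X * pS * X) := by
    have hC2 : (C (2:ℝ) : ℝ[X]) = 2 := by
      rw [show (2:ℝ) = ((2:ℕ):ℝ) by norm_num, map_natCast]; norm_num
    have hC2a : (C (2*a) : ℝ[X]) = 2 * C a := by
      rw [_root_.map_mul, hC2]
    rw [hpS, hpM, hpN, hC2, hC2a]
    ring
  set S : Matrix (Fin m) (Fin m) ℝ := aeval D pS with hS
  have hSval : S = (2:ℝ) • (1 : Matrix (Fin m) (Fin m) ℝ) + ((2*a) • (-D) + c • (D * D)) := by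
    rw [hS, hpS]
    simp [Algebra.algebraMap_eq_smul_one, smul_mul_assoc, pow_two]
    module
  have hSpsd : S.PosSemidef := by
    rw [hSval]
    exact ((smul_posSemidef Matrix.PosSemidef.one (by norm_num))).add
      ((smul_posSemidef (negDh_posSemidef m hh) (by positivity)).add
        (smul_posSemidef (DhSq_posSemidef m h) hc0.le))
  have hMpd : M.PosDef := by
    have : ((1 : Matrix (Fin m) (Fin m) ℝ) + (a • (-D) + c • (D * D))).PosDef :=
      Matrix.PosDef.one.add_posSemidef
        ((smul_posSemidef (negDh_posSemidef m hh) hΔT.le).add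
          (smul_posSemidef (DhSq_posSemidef m h) hc0.le))
    have he : M = (1 : Matrix (Fin m) (Fin m) ℝ) + (a • (-D) + c • (D * D)) := by
      rw [hM, pow_two, smul_neg]; abel
    rwa [he]
  have hdet : IsUnit M.det := (Matrix.isUnit_iff_isUnit_det M).mp hMpd.isUnit
  have comm : M * N = N * M := by
    rw [← haevalM, ← haevalN, ← _root_.map_mul, ← _root_.map_mul, mul_comm]
  have hinv_comm : M⁻¹ * N = N * M⁻¹ := by
    calc M⁻¹ * N = M⁻¹ * N * (M * M⁻¹) := by rw [Matrix.mul_nonsing_inv _ hdet, mul_one]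
      _ = M⁻¹ * (N * M) * M⁻¹ := by simp only [Matrix.mul_assoc]
      _ = M⁻¹ * (M * N) * M⁻¹ := by rw [← comm]
      _ = (M⁻¹ * M) * (N * M⁻¹) := by simp only [Matrix.mul_assoc]
      _ = N * M⁻¹ := by rw [Matrix.nonsing_inv_mul _ hdet, one_mul]
  have hMMNN : M * M - N * N = c • (D * S * D) := by
    rw [← haevalM, ← haevalN, ← _root_.map_mul, ← _root_.map_mul, ← map_sub, hpoly]
    simp [_root_.map_mul, hS, Algebra.algebraMap_eq_smul_one, smul_mul_assoc, Matrix.mul_assoc]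
  have hDc : Dᴴ = D := Dh_conjTranspose m h
  have hpsd2 : (M * M - N * N).PosSemidef := by
    rw [hMMNN]
    refine smul_posSemidef ?_ hc0.le
    have := hSpsd.conjTranspose_mul_mul_same D
    rwa [hDc] at this
  -- transpose symmetry of M and N
  have hNt : Nᵀ = N := by
    rw [hN, hD]; simp [transpose_sub, transpose_smul, Dh_transpose]
  have hMt : Mᵀ = M := by
    rw [hM, hD]; simp [transpose_add, transpose_sub, transpose_smul, transpose_pow, Dh_transpose]
  -- norm bridge
  have hnorm : ∀ (A : Matrix (Fin m) (Fin m) ℝ) (y : EuclideanSpace ℝ (Fin m)),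
      ‖act A y‖ ^ 2 = (A *ᵥ (WithLp.equiv 2 _ y)) ⬝ᵥ (A *ᵥ (WithLp.equiv 2 _ y)) := by
    intro A y
    rw [EuclideanSpace.norm_eq, Real.sq_sqrt (by positivity)]
    simp only [dotProduct]
    congr 1
    ext i
    have : act A y = (WithLp.equiv 2 _).symm (A *ᵥ (WithLp.equiv 2 _ y)) := rfl
    rw [this]
    simp [Real.norm_eq_abs, sq_abs, pow_two]
  have hquad : ∀ y : EuclideanSpace ℝ (Fin m), ‖act N y‖ ≤ ‖act M y‖ := by
    intro y
    set w : Fin m → ℝ := WithLp.equiv 2 _ y with hw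
    have h0 : 0 ≤ w ⬝ᵥ ((M * M - N * N) *ᵥ w) := by
      have := hpsd2.dotProduct_mulVec_nonneg w
      simpa using this
    have hA : ∀ (A : Matrix (Fin m) (Fin m) ℝ), Aᵀ = A →
        w ⬝ᵥ ((A * A) *ᵥ w) = (A *ᵥ w) ⬝ᵥ (A *ᵥ w) := by
      intro A hAt
      rw [← Matrix.mulVec_mulVec, Matrix.dotProduct_mulVec, ← Matrix.mulVec_transpose, hAt]
    have key : (N *ᵥ w) ⬝ᵥ (N *ᵥ w) ≤ (M *ᵥ w) ⬝ᵥ (M *ᵥ w) := by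
      rw [Matrix.sub_mulVec, dotProduct_sub, hA M hMt, hA N hNt] at h0
      linarith
    have e1 := hnorm N y
    have e2 := hnorm M y
    nlinarith [norm_nonneg (act N y), norm_nonneg (act M y)]
  -- finish
  rw [hPmat, hinv_comm]
  have hsplit : act (N * M⁻¹) x = act N (act M⁻¹ x) := by
    simp only [act, _root_.map_mul, ContinuousLinearMap.mul_apply]
  have hMMinv : act M (act M⁻¹ x) = x := by
    have : act M (act M⁻¹ x) = act (M * M⁻¹) x := by
      simp only [act, _root_.map_mul, ContinuousLinearMap.mul_apply]
    rw [this, Matrix.mul_nonsing_inv _ hdet]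
    simp only [act, _root_.map_one, ContinuousLinearMap.one_apply]
  calc ‖act (N * M⁻¹) x‖ = ‖act N (act M⁻¹ x)‖ := by rw [hsplit]
    _ ≤ ‖act M (act M⁻¹ x)‖ := hquad _
    _ = ‖x‖ := by rw [hMMinv]

theorem stmt15 (h ΔT ε : ℝ) (hh : 0 < h) (hΔT : 0 < ΔT) (hε : 0 < ε)
    (m : ℕ) (hm : 1 ≤ m)
    (F : EuclideanSpace ℝ (Fin m) → EuclideanSpace ℝ (Fin m))
    (C : ℝ) (hC : 0 ≤ C)
    (hLTE : ∀ U, ‖F U - act (Pmat m h ΔT ε 1) U‖ ≤ C * ΔT ^ 2 * ‖U‖)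
    (u0 : EuclideanSpace ℝ (Fin m)) (U : ℕ → ℕ → EuclideanSpace ℝ (Fin m))
    (h0 : ∀ k, U 0 k = u0)
    (hrec : ∀ n k, U (n + 1) (k + 1) =
      act (Pmat m h ΔT ε 1) (U n (k + 1)) + F (U n k)
        - act (Pmat m h ΔT ε 1) (U n k)) :
    ∀ n k, ‖U (n + 1) (k + 1)‖ ≤ ‖u0‖ +
      C * ((n : ℝ) + 1) * ΔT ^ 2 *
        ((Finset.range (n + 1)).sup' (Finset.nonempty_range_iff.mpr n.succ_ne_zero)
          fun j => ‖U j k‖) := by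
  have hstep : ∀ n k, ‖U (n + 1) (k + 1)‖ ≤ ‖U n (k + 1)‖ + C * ΔT ^ 2 * ‖U n k‖ := by
    intro n k
    rw [hrec, add_sub_assoc]
    calc ‖act (Pmat m h ΔT ε 1) (U n (k + 1)) + (F (U n k) - act (Pmat m h ΔT ε 1) (U n k))‖
        ≤ ‖act (Pmat m h ΔT ε 1) (U n (k + 1))‖ + ‖F (U n k) - act (Pmat m h ΔT ε 1) (U n k)‖ :=
          norm_add_le _ _
      _ ≤ ‖U n (k + 1)‖ + C * ΔT ^ 2 * ‖U n k‖ :=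
          add_le_add (norm_act_Pmat_le h ΔT ε hh hΔT hε _) (hLTE _)
  intro n
  induction n with
  | zero =>
    intro k
    have := hstep 0 k
    rw [h0 (k+1), h0 k] at this
    simpa [Finset.range_one, h0 k] using this
  | succ n IH =>
    intro k
    set f : ℕ → ℝ := fun j => ‖U j k‖ with hf
    have hne1 : (Finset.range (n + 1)).Nonempty := Finset.nonempty_range_iff.mpr n.succ_ne_zero
    have hne2 : (Finset.range (n + 2)).Nonempty := Finset.nonempty_range_iff.mpr (n+1).succ_ne_zero
    set S1 : ℝ := (Finset.range (n + 1)).sup' hne1 f with hS1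
    set S2 : ℝ := (Finset.range (n + 2)).sup' hne2 f with hS2
    have hsub : S1 ≤ S2 := by
      apply Finset.sup'_le
      intro j hj
      exact Finset.le_sup' f (by simp at hj ⊢; omega)
    have hlast : ‖U (n + 1) k‖ ≤ S2 := Finset.le_sup' f (by simp)
    have h1 := hstep (n + 1) k
    have h2 := IH k
    have hcoef : 0 ≤ C * ((n : ℝ) + 1) * ΔT ^ 2 := by positivity
    have hm1 : C * ((n : ℝ) + 1) * ΔT ^ 2 * S1 ≤ C * ((n : ℝ) + 1) * ΔT ^ 2 * S2 :=
      mul_le_mul_of_nonneg_left hsub hcoef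
    have hm2 : C * ΔT ^ 2 * ‖U (n + 1) k‖ ≤ C * ΔT ^ 2 * S2 :=
      mul_le_mul_of_nonneg_left hlast (by positivity)
    have hcast : ((n + 1 : ℕ) : ℝ) = (n : ℝ) + 1 := by push_cast; ring
    rw [hcast]
    have : ‖u0‖ + C * ((n : ℝ) + 1 + 1) * ΔT ^ 2 * S2
        = (‖u0‖ + C * ((n : ℝ) + 1) * ΔT ^ 2 * S2) + C * ΔT ^ 2 * S2 := by ring
    rw [this]
    linarith
end

section
/- (Stability of NPA-II.) Let q ≥ 1 be a natural number, let the coarse propagator be 𝒢(U) = P_3^q·U, and let ℱ : ℝ^m → ℝ^m be a map and C ≥ 0 a constant such that ‖ℱ(U) − P_3^q·U‖ ≤ C·ΔT²·‖U‖ for every U ∈ ℝ^m. Let u⁰ ∈ ℝ^m and let (U_n^k)_{n,k≥0} satisfy U_0^k = u⁰ for all k and U_{n+1}^{k+1} = P_3^q·U_n^{k+1} + ℱ(U_n^k) − P_3^q·U_n^k for all n, k ≥ 0. Then for every n and k, ‖U_{n+1}^{k+1}‖ ≤ ‖u⁰‖ + C·(n+1)·ΔT²·max_{0≤j≤n} ‖U_j^k‖.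 -/
lemma coord {m : ℕ} (A : Matrix (Fin m) (Fin m) ℝ)
    (x : EuclideanSpace ℝ (Fin m)) (i : Fin m) :
    (Matrix.toEuclideanCLM (𝕜 := ℝ) A x) i = ∑ j, A i j * x j := rfl

lemma inner_matvec {m : ℕ} (A : Matrix (Fin m) (Fin m) ℝ) (x y : EuclideanSpace ℝ (Fin m)) :
    (inner ℝ (Matrix.toEuclideanCLM (𝕜 := ℝ) A x) y : ℝ) = ∑ i, (∑ j, A i j * x j) * y i := by
  rw [PiLp.inner_apply]
  refine Finset.sum_congr rfl fun i _ => ?_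
  rw [coord]
  simp [RCLike.inner_apply]
  ring

lemma Dh_inner_nonpos {m : ℕ} (h : ℝ) (v : EuclideanSpace ℝ (Fin m)) :
    (inner ℝ (Matrix.toEuclideanCLM (𝕜 := ℝ) (Dh m h) v) v : ℝ) ≤ 0 := by
  classical
  set w : ℕ → ℝ := fun j => if hj : j < m then v ⟨j, hj⟩ else 0 with hw
  have hw0 : ∀ j, m ≤ j → w j = 0 := fun j hj => by simp [hw, Nat.not_lt.mpr hj]
  have hvw : ∀ i : Fin m, v i = w i := fun i => by simp [hw, i.isLt]
  set S : ℝ := ∑ j ∈ Finset.range m, w j ^ 2 with hS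
  set A : ℝ := ∑ j ∈ Finset.range m, w j * w (j + 1) with hA
  have key : (inner ℝ (Matrix.toEuclideanCLM (𝕜 := ℝ) (Dh m h) v) v : ℝ)
      = 1 / h ^ 2 * ((-2) * S + 2 * A) := by
    rw [inner_matvec]
    have step1 : ∀ i : Fin m, (∑ j, Dh m h i j * v j) * v i
        = 1 / h ^ 2 * ∑ b ∈ Finset.range m,
            ((if (i : ℕ) = b then (-2) * (w i * w b) else 0)
              + (if (i : ℕ) + 1 = b then w i * w b else 0)
              + (if b + 1 = (i : ℕ) then w i * w b else 0)) := by
      intro i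
      rw [Finset.mul_sum, Finset.sum_mul, Finset.sum_range]
      refine Finset.sum_congr rfl fun j _ => ?_
      rw [hvw, hvw]
      simp only [Dh, Matrix.of_apply]
      split_ifs <;> first | ring1 | omega
    have step2 : (∑ i, (∑ j, Dh m h i j * v j) * v i)
        = 1 / h ^ 2 * ∑ a ∈ Finset.range m, ∑ b ∈ Finset.range m,
            ((if a = b then (-2) * (w a * w b) else 0)
              + (if a + 1 = b then w a * w b else 0)
              + (if b + 1 = a then w a * w b else 0)) := by
      rw [Finset.mul_sum, Finset.sum_range]
      exact Finset.sum_congr rfl fun i _ => step1 i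
    rw [step2]
    congr 1
    have w_out : ∀ a, m ≤ a → w a = 0 := hw0
    have p1 : ∑ a ∈ Finset.range m, ∑ b ∈ Finset.range m,
        (if a = b then (-2) * (w a * w b) else 0) = (-2) * S := by
      rw [hS, Finset.mul_sum]
      refine Finset.sum_congr rfl fun a ha => ?_
      rw [Finset.sum_ite_eq _ _ (fun b => (-2) * (w a * w b)), if_pos ha]
      ring
    have p2 : ∑ a ∈ Finset.range m, ∑ b ∈ Finset.range m,
        (if a + 1 = b then w a * w b else 0) = A := by
      rw [hA]
      refine Finset.sum_congr rfl fun a _ => ?_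
      rw [Finset.sum_ite_eq _ _ (fun b => w a * w b)]
      split_ifs with hc
      · rfl
      · rw [hw0 (a + 1) (by simp only [Finset.mem_range] at hc; omega)]
        ring
    have p3 : ∑ a ∈ Finset.range m, ∑ b ∈ Finset.range m,
        (if b + 1 = a then w a * w b else 0) = A := by
      rw [Finset.sum_comm, hA]
      refine Finset.sum_congr rfl fun b _ => ?_
      rw [Finset.sum_ite_eq _ _ (fun a => w a * w b)]
      split_ifs with hc
      · ring
      · rw [hw0 (b + 1) (by simp only [Finset.mem_range] at hc; omega)]
        ring
    rw [Finset.sum_congr rfl (fun a (_ : a ∈ Finset.range m) => Finset.sum_add_distrib),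
      Finset.sum_add_distrib,
      Finset.sum_congr rfl (fun a (_ : a ∈ Finset.range m) => Finset.sum_add_distrib),
      Finset.sum_add_distrib, p1, p2, p3]
    ring
  have hshift : ∑ j ∈ Finset.range m, w (j + 1) ^ 2 ≤ S := by
    rw [hS]
    cases m with
    | zero => simp
    | succ n =>
      rw [Finset.sum_range_succ, Finset.sum_range_succ' (fun j => w j ^ 2),
        hw0 (n + 1) le_rfl]
      nlinarith [sq_nonneg (w 0)]
  have hAS : A ≤ S := by
    have h1 : A ≤ ∑ j ∈ Finset.range m, (w j ^ 2 + w (j + 1) ^ 2) / 2 := by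
      refine Finset.sum_le_sum fun j _ => ?_
      nlinarith [sq_nonneg (w j - w (j + 1))]
    have h2 : ∑ j ∈ Finset.range m, (w j ^ 2 + w (j + 1) ^ 2) / 2
        = (S + ∑ j ∈ Finset.range m, w (j + 1) ^ 2) / 2 := by
      rw [← Finset.sum_div, Finset.sum_add_distrib, hS]
    linarith
  rw [key]
  have h2 : (0 : ℝ) ≤ 1 / h ^ 2 := by positivity
  have h3 : (-2) * S + 2 * A ≤ 0 := by linarith
  calc 1 / h ^ 2 * ((-2) * S + 2 * A) ≤ 1 / h ^ 2 * 0 := by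
        exact mul_le_mul_of_nonneg_left h3 h2
    _ = 0 := by ring

lemma Dh_star {m : ℕ} (h : ℝ) : star (Dh m h) = Dh m h := by
  ext i j
  simp only [Matrix.star_apply, star_trivial, Dh, Matrix.of_apply]
  split_ifs <;> first | rfl | omega

lemma Dh_selfAdjoint {m : ℕ} (h : ℝ) :
    IsSelfAdjoint (Matrix.toEuclideanCLM (𝕜 := ℝ) (Dh m h)) := by
  show star _ = _
  rw [← map_star, Dh_star]

set_option maxHeartbeats 1000000 in
lemma Pmat_contract (m : ℕ) (h ΔT ε : ℝ) (hΔT : 0 ≤ ΔT)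
    (x : EuclideanSpace ℝ (Fin m)) :
    ‖Matrix.toEuclideanCLM (𝕜 := ℝ) (Pmat m h ΔT ε 3) x‖ ≤ ‖x‖ := by
  classical
  set c : ℝ := ((3 : ℕ) : ℝ) * ΔT with hc
  set d : ℝ := ε ^ 2 * ΔT with hd
  have hc0 : 0 ≤ c := by rw [hc]; positivity
  have hd0 : 0 ≤ d := by rw [hd]; positivity
  set D : Matrix (Fin m) (Fin m) ℝ := Dh m h with hD
  set B : Matrix (Fin m) (Fin m) ℝ := 1 - c • D with hB
  set A : Matrix (Fin m) (Fin m) ℝ := B + d • D ^ 2 with hA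
  have hPmat : Pmat m h ΔT ε 3 = A⁻¹ * B := rfl
  set f := Matrix.toEuclideanCLM (𝕜 := ℝ) (n := Fin m)
  set T := f D with hT
  have hsym : ∀ u w : EuclideanSpace ℝ (Fin m), (inner ℝ (T u) w : ℝ) = inner ℝ u (T w) :=
    fun u w => (Dh_selfAdjoint h).isSymmetric u w
  have hneg : ∀ u : EuclideanSpace ℝ (Fin m), (inner ℝ (T u) u : ℝ) ≤ 0 :=
    fun u => Dh_inner_nonpos h u
  -- applying f to A and B
  have hfB : ∀ u, f B u = u - c • T u := by
    intro u
    rw [hB, map_sub, map_smul, map_one]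
    rfl
  have hfA : ∀ u, f A u = f B u + d • T (T u) := by
    intro u
    rw [hA, map_add, map_smul, map_pow]
    simp [pow_two, ContinuousLinearMap.mul_apply]
    rfl
  -- coercivity of A
  have hcoer : ∀ u : EuclideanSpace ℝ (Fin m), ‖u‖ ^ 2 ≤ (inner ℝ (f A u) u : ℝ) := by
    intro u
    rw [hfA, hfB]
    rw [inner_add_left, inner_sub_left, real_inner_smul_left, real_inner_smul_left]
    have h1 : (inner ℝ (T (T u)) u : ℝ) = inner ℝ (T u) (T u) := hsym (T u) u
    rw [h1, real_inner_self_eq_norm_sq, real_inner_self_eq_norm_sq]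
    have := hneg u
    nlinarith [sq_nonneg ‖T u‖, mul_nonneg hd0 (sq_nonneg ‖T u‖),
      mul_nonneg hc0 (neg_nonneg.mpr (hneg u))]
  have hAdet : IsUnit A.det := by
    by_contra hdet
    have h0 : A.det = 0 := by
      simpa [isUnit_iff_ne_zero, not_not] using hdet
    obtain ⟨v, hvne, hv0⟩ := (Matrix.exists_mulVec_eq_zero_iff).mpr h0
    set xv : EuclideanSpace ℝ (Fin m) := (WithLp.equiv 2 (Fin m → ℝ)).symm v with hxv
    have hfx : f A xv = 0 := by
      rw [hxv]
      show f A ((WithLp.equiv _ _).symm v) = 0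
      rw [WithLp.equiv_symm_apply, Matrix.toEuclideanCLM_toLp, hv0]
      rfl
    have h1 : ‖xv‖ ^ 2 ≤ 0 := by
      have := hcoer xv
      rw [hfx] at this
      simpa using this
    have h2 : xv = 0 := by
      have : ‖xv‖ = 0 := le_antisymm (by nlinarith [norm_nonneg xv]) (norm_nonneg xv)
      exact norm_eq_zero.mp this
    apply hvne
    have : (WithLp.equiv 2 (Fin m → ℝ)) xv = v := by simp [hxv]
    rw [← this, h2]
    rfl
  have hAiA : A * A⁻¹ = 1 := Matrix.mul_nonsing_inv A hAdet
  have hiAA : A⁻¹ * A = 1 := Matrix.nonsing_inv_mul A hAdet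
  have hABcomm : A * B = B * A := by
    have hDD2 : Commute D (D ^ 2) := (Commute.refl D).pow_right 2
    have hX : Commute B (d • D ^ 2) :=
      ((Commute.one_left (D ^ 2)).sub_left (hDD2.smul_left c)).smul_right d
    rw [hA, add_mul, mul_add, hX.eq]
  have hPBcomm : A⁻¹ * B = B * A⁻¹ := by
    calc A⁻¹ * B = A⁻¹ * B * (A * A⁻¹) := by rw [hAiA, mul_one]
      _ = A⁻¹ * (B * A) * A⁻¹ := by simp only [mul_assoc]
      _ = A⁻¹ * (A * B) * A⁻¹ := by rw [hABcomm]
      _ = (A⁻¹ * A) * (B * A⁻¹) := by simp only [mul_assoc]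
      _ = B * A⁻¹ := by rw [hiAA, one_mul]
  -- the main estimate
  set y : EuclideanSpace ℝ (Fin m) := f A⁻¹ x with hy
  have hxy : f A y = x := by
    rw [hy, ← ContinuousLinearMap.mul_apply, ← map_mul, hAiA, map_one,
      ContinuousLinearMap.one_apply]
  have hPx : f (Pmat m h ΔT ε 3) x = f B y := by
    rw [hPmat, hPBcomm, map_mul, ContinuousLinearMap.mul_apply, hy]
  have hsq : ‖f B y‖ ^ 2 ≤ ‖f A y‖ ^ 2 := by
    rw [hfA y]
    rw [norm_add_sq_real]
    have hinner : (0 : ℝ) ≤ inner ℝ (f B y) (d • T (T y)) := by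
      rw [real_inner_smul_right, hfB, inner_sub_left, real_inner_smul_left,
        ← hsym y (T y), real_inner_self_eq_norm_sq]
      have h3 : (inner ℝ (T y) (T (T y)) : ℝ) ≤ 0 := by
        rw [← hsym (T y) (T y)]
        exact hneg (T y)
      have h4 : (0 : ℝ) ≤ ‖T y‖ ^ 2 - c * inner ℝ (T y) (T (T y)) := by
        nlinarith [mul_nonneg hc0 (neg_nonneg.mpr h3), sq_nonneg ‖T y‖]
      exact mul_nonneg hd0 h4
    linarith [hinner, sq_nonneg ‖d • T (T y)‖]
  have hfinal : ‖f B y‖ ≤ ‖f A y‖ := by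
    have h5 := Real.sqrt_le_sqrt hsq
    rwa [Real.sqrt_sq (norm_nonneg _), Real.sqrt_sq (norm_nonneg _)] at h5
  calc ‖f (Pmat m h ΔT ε 3) x‖ = ‖f B y‖ := by rw [hPx]
    _ ≤ ‖f A y‖ := hfinal
    _ = ‖x‖ := by rw [hxy]

lemma pow_contract {m : ℕ} (p : EuclideanSpace ℝ (Fin m) →L[ℝ] EuclideanSpace ℝ (Fin m))
    (hp : ∀ x, ‖p x‖ ≤ ‖x‖) : ∀ (q : ℕ) (x), ‖(p ^ q) x‖ ≤ ‖x‖ := by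
  intro q
  induction q with
  | zero => intro x; simp
  | succ n ih =>
    intro x
    rw [pow_succ, ContinuousLinearMap.mul_apply]
    exact (ih (p x)).trans (hp x)

theorem stmt17 (h ΔT ε : ℝ) (hh : 0 < h) (hΔT : 0 < ΔT) (hε : 0 < ε)
    (m : ℕ) (hm : 1 ≤ m) (q : ℕ) (hq : 1 ≤ q)
    (F : EuclideanSpace ℝ (Fin m) → EuclideanSpace ℝ (Fin m))
    (C : ℝ) (hC : 0 ≤ C)
    (hLTE : ∀ U, ‖F U - act (Pmat m h ΔT ε 3 ^ q) U‖ ≤ C * ΔT ^ 2 * ‖U‖)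
    (u0 : EuclideanSpace ℝ (Fin m)) (U : ℕ → ℕ → EuclideanSpace ℝ (Fin m))
    (h0 : ∀ k, U 0 k = u0)
    (hrec : ∀ n k, U (n + 1) (k + 1) =
      act (Pmat m h ΔT ε 3 ^ q) (U n (k + 1)) + F (U n k)
        - act (Pmat m h ΔT ε 3 ^ q) (U n k)) :
    ∀ n k, ‖U (n + 1) (k + 1)‖ ≤ ‖u0‖ +
      C * ((n : ℝ) + 1) * ΔT ^ 2 *
        ((Finset.range (n + 1)).sup' (Finset.nonempty_range_iff.mpr n.succ_ne_zero)
          fun j => ‖U j k‖) := by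
  have hcontr : ∀ x : EuclideanSpace ℝ (Fin m), ‖act (Pmat m h ΔT ε 3 ^ q) x‖ ≤ ‖x‖ := by
    intro x
    show ‖Matrix.toEuclideanCLM (𝕜 := ℝ) (Pmat m h ΔT ε 3 ^ q) x‖ ≤ ‖x‖
    rw [map_pow]
    exact pow_contract _ (Pmat_contract m h ΔT ε hΔT.le) q x
  have hstep : ∀ n k, ‖U (n + 1) (k + 1)‖ ≤ ‖U n (k + 1)‖ + C * ΔT ^ 2 * ‖U n k‖ := by
    intro n k
    rw [hrec n k, add_sub_assoc]
    exact (norm_add_le _ _).trans (add_le_add (hcontr _) (hLTE _))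
  intro n k
  induction n with
  | zero =>
    have hb := hstep 0 k
    rw [h0 (k + 1)] at hb
    simp only [Nat.cast_zero, zero_add, Finset.range_one, Finset.sup'_singleton]
    calc ‖U 1 (k + 1)‖ ≤ ‖u0‖ + C * ΔT ^ 2 * ‖U 0 k‖ := hb
      _ = ‖u0‖ + C * 1 * ΔT ^ 2 * ‖U 0 k‖ := by ring
  | succ n ih =>
    set M : ℝ := (Finset.range (n + 1)).sup' (Finset.nonempty_range_iff.mpr n.succ_ne_zero)
      (fun j => ‖U j k‖) with hM
    set M' : ℝ := (Finset.range (n + 2)).sup' (Finset.nonempty_range_iff.mpr (n+1).succ_ne_zero)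
      (fun j => ‖U j k‖) with hM'
    have hMM' : M ≤ M' := by
      rw [hM]
      refine Finset.sup'_le _ _ fun j hj => ?_
      refine Finset.le_sup' (f := fun j => ‖U j k‖) ?_
      simp only [Finset.mem_range] at hj ⊢
      omega
    have hlast : ‖U (n + 1) k‖ ≤ M' := by
      refine Finset.le_sup' (f := fun j => ‖U j k‖) ?_
      simp only [Finset.mem_range]
      omega
    have hM'0 : 0 ≤ M' := le_trans (norm_nonneg _) hlast
    have h1 := hstep (n + 1) k
    have h2 : ‖U (n + 1) (k + 1)‖ ≤ ‖u0‖ + C * ((n : ℝ) + 1) * ΔT ^ 2 * M := ih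
    have hCT : 0 ≤ C * ΔT ^ 2 := by positivity
    calc ‖U (n + 1 + 1) (k + 1)‖ ≤ ‖U (n + 1) (k + 1)‖ + C * ΔT ^ 2 * ‖U (n + 1) k‖ := h1
      _ ≤ (‖u0‖ + C * ((n : ℝ) + 1) * ΔT ^ 2 * M) + C * ΔT ^ 2 * M' := by
          have := mul_le_mul_of_nonneg_left hlast hCT
          linarith
      _ ≤ ‖u0‖ + C * (((n : ℕ) + 1 : ℕ) + 1 : ℝ) * ΔT ^ 2 * M' := by
          push_cast
          have hM2 := mul_le_mul_of_nonneg_left hMM' (by positivity : (0:ℝ) ≤ C * ((n:ℝ)+1) * ΔT ^ 2)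
          nlinarith [mul_nonneg hCT hM'0]
      _ = ‖u0‖ + C * (((n + 1 : ℕ) : ℝ) + 1) * ΔT ^ 2 * M' := by push_cast; ring
end

section
/- (Convergence of NPA-II.) Let q ≥ 1 be a natural number, let the coarse propagator be 𝒢(U) = P_3^q·U, and let ℱ : ℝ^m → ℝ^m be a map and C₂ ≥ 0 a constant such that ‖(ℱ(U) − P_3^q·U) − (ℱ(V) − P_3^q·V)‖ ≤ C₂·ΔT²·‖U − V‖ for all U, V ∈ ℝ^m. Let N ≥ 1 be an integer, u⁰ ∈ ℝ^m, define the fine solution by U(T_0) = u⁰ and U(T_{n+1}) = ℱ(U(T_n)) for 0 ≤ n ≤ N−1, and let (U_n^k)_{0≤n≤N, k≥0} satisfy U_0^k = u⁰ for all k and U_{n+1}^{k+1} = P_3^q·U_n^{k+1} + ℱ(U_n^k) − P_3^q·U_n^k for 0 ≤ n ≤ N−1 and k ≥ 0. Set E_n^k = U(T_n) − U_n^k and β = ‖P_3‖ (so β < 1). Then for every k ≥ 0, max_{1≤j≤N} ‖E_j^{k+1}‖ ≤ (C₂·ΔT²)^{k+1} · min{ ((1 − β^{N−1})/(1 − β))^{k+1}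 , C(N−1, k+1) } · max_{1≤j≤N} ‖E_j^0‖, where C(·,·) denotes the binomial coefficient. -/
section Analytic

open Matrix

/-- difference matrix -/
noncomputable def Lmat (m : ℕ) : Matrix (Fin (m+1)) (Fin m) ℝ :=
  Matrix.of fun i j =>
    (if (i : ℕ) = (j : ℕ) then (1:ℝ) else 0) - (if (i : ℕ) = (j : ℕ) + 1 then 1 else 0)

lemma delta_sum (m : ℕ) (x y : ℕ) (hx : x ≤ m) :
    (∑ i : Fin (m+1), (if (i : ℕ) = x then (1:ℝ) else 0) * (if (i : ℕ) = y then 1 else 0))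
      = if x = y then 1 else 0 := by
  rw [Finset.sum_eq_single (⟨x, by omega⟩ : Fin (m+1))]
  · simp
  · intro i _ hi
    have hix : (i : ℕ) ≠ x := by
      intro hc; exact hi (Fin.ext (by simpa using hc))
    simp [hix]
  · simp

lemma LtL (m : ℕ) (j k : Fin m) :
    ((Lmat m)ᵀ * Lmat m) j k =
      (if (j:ℕ) = (k:ℕ) then (2:ℝ) else 0)
      - (if (j:ℕ) = (k:ℕ)+1 then 1 else 0) - (if (k:ℕ) = (j:ℕ)+1 then 1 else 0) := by
  have hj := j.isLt; have hk := k.isLt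
  simp only [Matrix.mul_apply, Matrix.transpose_apply, Lmat, Matrix.of_apply]
  simp only [sub_mul, mul_sub]
  rw [Finset.sum_sub_distrib, Finset.sum_sub_distrib, Finset.sum_sub_distrib]
  rw [delta_sum m j k (by omega), delta_sum m (j:ℕ) ((k:ℕ)+1) (by omega),
      delta_sum m ((j:ℕ)+1) (k:ℕ) (by omega), delta_sum m ((j:ℕ)+1) ((k:ℕ)+1) (by omega)]
  split_ifs <;> first | ring1 | (exfalso; omega)

lemma negDh (m : ℕ) (h : ℝ) :
    -(Dh m h) = (1/h^2) • ((Lmat m)ᵀ * Lmat m) := by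
  ext j k
  simp only [Matrix.neg_apply, Matrix.smul_apply, LtL, Dh, Matrix.of_apply, smul_eq_mul]
  split_ifs <;> first | ring1 | (exfalso; omega)

lemma Lmat_mulVec_eq_zero (m : ℕ) (x : Fin m → ℝ) (hx : Lmat m *ᵥ x = 0) : x = 0 := by
  have key : ∀ n, ∀ hn : n < m, x ⟨n, hn⟩ = 0 := by
    intro n
    induction n using Nat.strong_induction_on with
    | _ n IH =>
      intro hn
      have h1 := congrFun hx ⟨n, by omega⟩
      simp only [Matrix.mulVec, dotProduct, Lmat, Matrix.of_apply, Pi.zero_apply] at h1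
      simp only [sub_mul, Finset.sum_sub_distrib] at h1
      have e1 : (∑ j : Fin m, (if (n : ℕ) = (j:ℕ) then (1:ℝ) else 0) * x j) = x ⟨n, hn⟩ := by
        rw [Finset.sum_eq_single (⟨n, hn⟩ : Fin m)]
        · simp
        · intro i _ hi
          have : (n:ℕ) ≠ (i:ℕ) := fun hc => hi (Fin.ext (by simpa using hc.symm))
          simp [this]
        · simp
      rcases n with _ | n'
      · have e2 : (∑ j : Fin m, (if (0 : ℕ) = (j:ℕ)+1 then (1:ℝ) else 0) * x j) = 0 := by
          apply Finset.sum_eq_zero; intro i _; simp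
        rw [e1, e2] at h1; simpa using h1
      · have hn' : n' < m := by omega
        have e2 : (∑ j : Fin m, (if (n'+1 : ℕ) = (j:ℕ)+1 then (1:ℝ) else 0) * x j)
            = x ⟨n', hn'⟩ := by
          rw [Finset.sum_eq_single (⟨n', hn'⟩ : Fin m)]
          · simp
          · intro i _ hi
            have : (n'+1:ℕ) ≠ (i:ℕ)+1 := by
              intro hc
              have hin : (i:ℕ) = n' := by omega
              exact hi (Fin.ext (by simp [hin]))
            rw [if_neg this, zero_mul]
          · simp
        rw [e1, e2, IH n' (by omega) hn', sub_zero] at h1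
        exact h1
  funext j
  have := key (j:ℕ) j.isLt
  simpa using this

lemma negDh_posDef (m : ℕ) (h : ℝ) (hh : 0 < h) : (-(Dh m h)).PosDef := by
  have hL : ∀ x : Fin m → ℝ, x ⬝ᵥ (((Lmat m)ᵀ * Lmat m) *ᵥ x) = (Lmat m *ᵥ x) ⬝ᵥ (Lmat m *ᵥ x) := by
    intro x
    rw [← Matrix.mulVec_mulVec, Matrix.dotProduct_mulVec, Matrix.vecMul_transpose]
  rw [Matrix.posDef_iff_dotProduct_mulVec]
  constructor
  · rw [negDh m h]
    have hbase := Matrix.isHermitian_conjTranspose_mul_self (Lmat m)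
    rw [Matrix.conjTranspose_eq_transpose_of_trivial] at hbase
    unfold Matrix.IsHermitian
    rw [Matrix.conjTranspose_smul, star_trivial, hbase.eq]
  · intro x hx
    have hsx : star x = x := by funext i; simp
    rw [negDh m h, Matrix.smul_mulVec, dotProduct_smul, hsx, hL, smul_eq_mul]
    have hLx : Lmat m *ᵥ x ≠ 0 := fun hc => hx (Lmat_mulVec_eq_zero m x hc)
    have : 0 < (Lmat m *ᵥ x) ⬝ᵥ (Lmat m *ᵥ x) := by
      have := dotProduct_star_self_pos_iff (v := Lmat m *ᵥ x)
      rw [star_trivial] at this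
      exact this.mpr hLx
    have h2 : 0 < 1/h^2 := by positivity
    exact mul_pos h2 this

end Analytic

section Analytic2

open Matrix

lemma posSemidef_smul_mat {m : ℕ} {M : Matrix (Fin m) (Fin m) ℝ} (hM : M.PosSemidef) {c : ℝ}
    (hc : 0 ≤ c) : (c • M).PosSemidef := by
  rw [Matrix.posSemidef_iff_dotProduct_mulVec]
  constructor
  · unfold Matrix.IsHermitian
    rw [Matrix.conjTranspose_smul, star_trivial, hM.1.eq]
  · intro x
    rw [Matrix.smul_mulVec, dotProduct_smul, smul_eq_mul]
    exact mul_nonneg hc ((Matrix.posSemidef_iff_dotProduct_mulVec.mp hM).2 x)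

lemma quad_symm {m : ℕ} (M : Matrix (Fin m) (Fin m) ℝ) (hM : Mᵀ = M) (y : Fin m → ℝ) :
    (M *ᵥ y) ⬝ᵥ (M *ᵥ y) = ((M * M) *ᵥ y) ⬝ᵥ y := by
  rw [Matrix.dotProduct_mulVec, ← Matrix.mulVec_transpose, hM, Matrix.mulVec_mulVec]

lemma Pmat_contract_s18 (h ΔT ε : ℝ) (hh : 0 < h) (hΔT : 0 < ΔT) (hε : 0 < ε) (m : ℕ)
    (v : Fin m → ℝ) (hv : v ≠ 0) :
    (Pmat m h ΔT ε 3 *ᵥ v) ⬝ᵥ (Pmat m h ΔT ε 3 *ᵥ v) < v ⬝ᵥ v := by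
  set D := Dh m h with hD
  set s : ℝ := ((3:ℕ):ℝ) * ΔT with hs
  set c : ℝ := ε^2 * ΔT with hc
  set A : Matrix (Fin m) (Fin m) ℝ := 1 - s • D with hA
  set B : Matrix (Fin m) (Fin m) ℝ := 1 - s • D + c • D^2 with hB
  have hBA : B = A + c • D^2 := rfl
  have hP : Pmat m h ΔT ε 3 = B⁻¹ * A := rfl
  have hs0 : 0 < s := by
    rw [hs]; norm_num; exact hΔT
  have hc0 : 0 < c := by positivity
  have hnD : (-D).PosDef := negDh_posDef m h hh
  have hDherm : Dᴴ = D := by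
    have h1 : (-D)ᴴ = -D := hnD.1
    rw [Matrix.conjTranspose_neg] at h1
    exact neg_inj.mp h1
  have hArw : A = 1 + s • (-D) := by
    rw [hA, smul_neg, ← sub_eq_add_neg]
  have hApos : A.PosDef := by
    rw [hArw]
    exact Matrix.PosDef.one.add_posSemidef (posSemidef_smul_mat hnD.posSemidef hs0.le)
  have hD2 : (D^2).PosSemidef := by
    have : D^2 = Dᴴ * D := by rw [hDherm, pow_two]
    rw [this]
    exact Matrix.posSemidef_conjTranspose_mul_self D
  have hBpos : B.PosDef := by
    rw [hBA]
    exact hApos.add_posSemidef (posSemidef_smul_mat hD2 hc0.le)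
  have hBApos : (B + A).PosDef := hBpos.add hApos
  have hdetB : IsUnit B.det := (Matrix.isUnit_iff_isUnit_det _).mp hBpos.isUnit
  have cDA : Commute D A := by
    rw [hA]
    exact (Commute.one_right D).sub_right ((Commute.refl D).smul_right s)
  have cDB : Commute D B := by
    rw [hBA]
    exact cDA.add_right (((Commute.refl D).pow_right 2).smul_right c)
  have cAB : Commute A B := by
    rw [hBA]
    exact (Commute.refl A).add_right ((cDA.symm.pow_right 2).smul_right c)
  have hAt : Aᵀ = A := by
    rw [← Matrix.conjTranspose_eq_transpose_of_trivial]; exact hApos.1.eq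
  have hBt : Bᵀ = B := by
    rw [← Matrix.conjTranspose_eq_transpose_of_trivial]; exact hBpos.1.eq
  set y : Fin m → ℝ := B⁻¹ *ᵥ v with hy
  have hyv : B *ᵥ y = v := by
    rw [hy, Matrix.mulVec_mulVec, Matrix.mul_nonsing_inv _ hdetB, Matrix.one_mulVec]
  have hy0 : y ≠ 0 := by
    intro h0
    apply hv
    rw [← hyv, h0, Matrix.mulVec_zero]
  have hinv : B⁻¹ * A = A * B⁻¹ := by
    calc B⁻¹ * A = B⁻¹ * A * (B * B⁻¹) := by
          rw [Matrix.mul_nonsing_inv _ hdetB, Matrix.mul_one]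
      _ = B⁻¹ * (A * B) * B⁻¹ := by simp only [Matrix.mul_assoc]
      _ = B⁻¹ * (B * A) * B⁻¹ := by rw [cAB.eq]
      _ = (B⁻¹ * B) * (A * B⁻¹) := by simp only [Matrix.mul_assoc]
      _ = A * B⁻¹ := by rw [Matrix.nonsing_inv_mul _ hdetB, Matrix.one_mul]
  have hPv : Pmat m h ΔT ε 3 *ᵥ v = A *ᵥ y := by
    rw [hP, hinv, hy, Matrix.mulVec_mulVec]
  set z : Fin m → ℝ := D *ᵥ y with hz
  have hz0 : z ≠ 0 := by
    intro h0
    apply hy0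
    have hinj : Function.Injective (-D).mulVec := Matrix.mulVec_injective_iff_isUnit.mpr hnD.isUnit
    apply hinj
    rw [Matrix.neg_mulVec, ← hz, h0, Matrix.mulVec_zero, neg_zero]
  have hfact : B * B - A * A = c • (D * ((B + A) * D)) := by
    have e1 : (B - A) * (B + A) = B * B - A * A := by
      rw [Matrix.sub_mul, Matrix.mul_add B B A, Matrix.mul_add A B A, cAB.eq]
      abel
    have e2 : B - A = c • D ^ 2 := by rw [hBA, add_sub_cancel_left]
    have e3 : D * (B + A) = (B + A) * D := (cDB.add_right cDA).eq
    rw [← e1, e2, Matrix.smul_mul]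
    congr 1
    rw [pow_two, Matrix.mul_assoc, e3]
  have hkey : v ⬝ᵥ v - (Pmat m h ΔT ε 3 *ᵥ v) ⬝ᵥ (Pmat m h ΔT ε 3 *ᵥ v)
      = c * (((B + A) *ᵥ z) ⬝ᵥ z) := by
    rw [hPv, ← hyv]
    rw [quad_symm B hBt y, quad_symm A hAt y]
    rw [← sub_dotProduct, ← Matrix.sub_mulVec, hfact]
    rw [Matrix.smul_mulVec, smul_dotProduct, smul_eq_mul]
    congr 1
    rw [← Matrix.mulVec_mulVec, ← Matrix.mulVec_mulVec]
    rw [dotProduct_comm, Matrix.dotProduct_mulVec, ← Matrix.mulVec_transpose]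
    have hDt : Dᵀ = D := by
      rw [← Matrix.conjTranspose_eq_transpose_of_trivial]; exact hDherm
    rw [hDt, ← hz, dotProduct_comm]
  have hpos : 0 < ((B + A) *ᵥ z) ⬝ᵥ z := by
    have := (Matrix.posDef_iff_dotProduct_mulVec.mp hBApos).2 hz0
    rw [star_trivial] at this
    rw [dotProduct_comm]
    exact this
  have : 0 < v ⬝ᵥ v - (Pmat m h ΔT ε 3 *ᵥ v) ⬝ᵥ (Pmat m h ΔT ε 3 *ᵥ v) := by
    rw [hkey]; exact mul_pos hc0 hpos
  linarith

end Analytic2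

section Analytic3

open Matrix

lemma act_norm_lt {m : ℕ} (h ΔT ε : ℝ) (hh : 0 < h) (hΔT : 0 < ΔT) (hε : 0 < ε)
    (x : EuclideanSpace ℝ (Fin m)) (hx : x ≠ 0) :
    ‖Matrix.toEuclideanCLM (𝕜 := ℝ) (Pmat m h ΔT ε 3) x‖ < ‖x‖ := by
  set P := Pmat m h ΔT ε 3 with hP
  set T := Matrix.toEuclideanCLM (𝕜 := ℝ) P with hT
  set v : Fin m → ℝ := fun i => x i with hv
  have hveq : (WithLp.equiv 2 (Fin m → ℝ)) x = v := rfl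
  have hv0 : v ≠ 0 := by
    intro h0
    apply hx
    ext i
    exact congrFun h0 i
  have hTx : ∀ i, T x i = (P *ᵥ v) i := by
    intro i
    have h1 := Matrix.ofLp_toEuclideanCLM (𝕜 := ℝ) P x
    have h2 := congrFun h1 i
    exact h2
  have hnx : ‖x‖ ^ 2 = v ⬝ᵥ v := by
    rw [EuclideanSpace.norm_eq, Real.sq_sqrt (by positivity)]
    simp [dotProduct, sq, v]
  have hnTx : ‖T x‖ ^ 2 = (P *ᵥ v) ⬝ᵥ (P *ᵥ v) := by
    rw [EuclideanSpace.norm_eq, Real.sq_sqrt (by positivity)]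
    simp [dotProduct, hTx, sq]
  have hlt := Pmat_contract_s18 h ΔT ε hh hΔT hε m v hv0
  have : ‖T x‖ ^ 2 < ‖x‖ ^ 2 := by rw [hnx, hnTx]; exact hlt
  exact lt_of_pow_lt_pow_left₀ 2 (norm_nonneg x) this

lemma Pmat_opNorm_lt_one (h ΔT ε : ℝ) (hh : 0 < h) (hΔT : 0 < ΔT) (hε : 0 < ε)
    (m : ℕ) (hm : 1 ≤ m) : opNorm (Pmat m h ΔT ε 3) < 1 := by
  set T := Matrix.toEuclideanCLM (𝕜 := ℝ) (Pmat m h ΔT ε 3) with hT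
  have hop : opNorm (Pmat m h ΔT ε 3) = ‖T‖ := rfl
  rw [hop]
  have hex : ∃ x₀ : EuclideanSpace ℝ (Fin m), x₀ ∈ Metric.sphere (0 : EuclideanSpace ℝ (Fin m)) 1 := by
    refine ⟨EuclideanSpace.single ⟨0, by omega⟩ (1:ℝ), ?_⟩
    rw [mem_sphere_zero_iff_norm, EuclideanSpace.norm_single]
    norm_num
  obtain ⟨x₀, hx₀S, hmax⟩ := (isCompact_sphere (0 : EuclideanSpace ℝ (Fin m)) 1).exists_isMaxOn
    hex ((T.continuous.norm).continuousOn)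
  have hn1 : ‖x₀‖ = 1 := mem_sphere_zero_iff_norm.mp hx₀S
  have hx₀0 : x₀ ≠ 0 := by
    intro h0; rw [h0, norm_zero] at hn1; norm_num at hn1
  have hTled : ‖T‖ ≤ ‖T x₀‖ := by
    apply ContinuousLinearMap.opNorm_le_bound _ (norm_nonneg _)
    intro x
    rcases eq_or_ne x 0 with rfl | hx
    · simp
    · have hxn : ‖x‖ ≠ 0 := norm_ne_zero_iff.mpr hx
      have hu : (‖x‖⁻¹ • x) ∈ Metric.sphere (0 : EuclideanSpace ℝ (Fin m)) 1 := by
        rw [mem_sphere_zero_iff_norm, norm_smul, norm_inv, norm_norm]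
        field_simp
      have hle : ‖T (‖x‖⁻¹ • x)‖ ≤ ‖T x₀‖ := hmax hu
      rw [map_smul T, norm_smul, norm_inv, norm_norm] at hle
      calc ‖T x‖ = ‖x‖ * (‖x‖⁻¹ * ‖T x‖) := by field_simp
        _ ≤ ‖x‖ * ‖T x₀‖ := by
            apply mul_le_mul_of_nonneg_left _ (norm_nonneg x)
            exact hle
        _ = ‖T x₀‖ * ‖x‖ := by ring
  calc ‖T‖ ≤ ‖T x₀‖ := hTled
    _ < ‖x₀‖ := act_norm_lt h ΔT ε hh hΔT hε x₀ hx₀0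
    _ = 1 := hn1

end Analytic3

lemma sum_range_choose_eq (M k : ℕ) :
    (∑ j ∈ Finset.range M, (j.choose k)) = M.choose (k+1) := by
  induction M with
  | zero => simp
  | succ M ih =>
      rw [Finset.sum_range_succ, ih, Nat.choose_succ_succ' M k]
      omega


theorem stmt18 (h ΔT ε : ℝ) (hh : 0 < h) (hΔT : 0 < ΔT) (hε : 0 < ε)
    (m : ℕ) (hm : 1 ≤ m) (q : ℕ) (hq : 1 ≤ q)
    (F : EuclideanSpace ℝ (Fin m) → EuclideanSpace ℝ (Fin m))
    (C₂ : ℝ) (hC₂ : 0 ≤ C₂)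
    (hLTE : ∀ U V, ‖(F U - act (Pmat m h ΔT ε 3 ^ q) U) - (F V - act (Pmat m h ΔT ε 3 ^ q) V)‖
      ≤ C₂ * ΔT ^ 2 * ‖U - V‖)
    (N : ℕ) (hN : 1 ≤ N)
    (u0 : EuclideanSpace ℝ (Fin m))
    (Uf : ℕ → EuclideanSpace ℝ (Fin m)) (U : ℕ → ℕ → EuclideanSpace ℝ (Fin m))
    (hUf0 : Uf 0 = u0)
    (hUfrec : ∀ n < N, Uf (n + 1) = F (Uf n))
    (h0 : ∀ k, U 0 k = u0)
    (hrec : ∀ n < N, ∀ k, U (n + 1) (k + 1) =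
      act (Pmat m h ΔT ε 3 ^ q) (U n (k + 1)) + F (U n k)
        - act (Pmat m h ΔT ε 3 ^ q) (U n k)) :
    ∀ k : ℕ,
      ((Finset.Icc 1 N).sup' (Finset.nonempty_Icc.mpr hN)
          fun j => ‖Uf j - U j (k + 1)‖) ≤
        (C₂ * ΔT ^ 2) ^ (k + 1) *
          min (((1 - opNorm (Pmat m h ΔT ε 3) ^ (N - 1)) /
                  (1 - opNorm (Pmat m h ΔT ε 3))) ^ (k + 1))
              ((N - 1).choose (k + 1) : ℝ) *
          ((Finset.Icc 1 N).sup' (Finset.nonempty_Icc.mpr hN)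
            fun j => ‖Uf j - U j 0‖) := by
  intro k
  set P := Pmat m h ΔT ε 3 with hP
  set β := opNorm P with hβ
  set α := C₂ * ΔT ^ 2 with hα
  have hβ0 : 0 ≤ β := norm_nonneg _
  have hβ1 : β < 1 := Pmat_opNorm_lt_one h ΔT ε hh hΔT hε m hm
  have hα0 : 0 ≤ α := by positivity
  have hne : Finset.Nonempty (Finset.Icc 1 N) := Finset.nonempty_Icc.mpr hN
  set e : ℕ → ℕ → ℝ := fun n k => ‖Uf n - U n k‖ with he
  set Mx : ℕ → ℝ := fun k => (Finset.Icc 1 N).sup' hne (fun j => e j k) with hMx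
  have e00 : ∀ k', e 0 k' = 0 := by
    intro k'; simp only [he, hUf0, h0 k', sub_self, norm_zero]
  have eNonneg : ∀ n k', 0 ≤ e n k' := fun n k' => norm_nonneg _
  have hle_M : ∀ n k', 1 ≤ n → n ≤ N → e n k' ≤ Mx k' := by
    intro n k' h1 h2
    exact Finset.le_sup' (fun j => e j k') (Finset.mem_Icc.mpr ⟨h1, h2⟩)
  have hM0 : ∀ k', 0 ≤ Mx k' := fun k' => le_trans (eNonneg 1 k') (hle_M 1 k' le_rfl hN)
  have hPq : ∀ w : EuclideanSpace ℝ (Fin m), ‖act (P ^ q) w‖ ≤ β * ‖w‖ := by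
    intro w
    have h1 : ‖Matrix.toEuclideanCLM (𝕜 := ℝ) (P ^ q) w‖
        ≤ ‖Matrix.toEuclideanCLM (𝕜 := ℝ) (P ^ q)‖ * ‖w‖ := ContinuousLinearMap.le_opNorm _ _
    have h2 : Matrix.toEuclideanCLM (𝕜 := ℝ) (P ^ q)
        = (Matrix.toEuclideanCLM (𝕜 := ℝ) P) ^ q := map_pow _ _ _
    have h3 : ‖(Matrix.toEuclideanCLM (𝕜 := ℝ) P) ^ q‖
        ≤ ‖Matrix.toEuclideanCLM (𝕜 := ℝ) P‖ ^ q := norm_pow_le' _ (by omega)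
    have h4 : β ^ q ≤ β := by
      calc β ^ q ≤ β ^ 1 := pow_le_pow_of_le_one hβ0 hβ1.le hq
        _ = β := pow_one β
    have h5 : ‖Matrix.toEuclideanCLM (𝕜 := ℝ) (P ^ q)‖ ≤ β := by
      rw [h2]; exact le_trans h3 h4
    calc ‖act (P ^ q) w‖ ≤ ‖Matrix.toEuclideanCLM (𝕜 := ℝ) (P ^ q)‖ * ‖w‖ := h1
      _ ≤ β * ‖w‖ := mul_le_mul_of_nonneg_right h5 (norm_nonneg w)
  have hstep : ∀ n, n < N → ∀ k', e (n+1) (k'+1) ≤ β * e n (k'+1) + α * e n k' := by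
    intro n hn k'
    have hid : Uf (n+1) - U (n+1) (k'+1)
        = act (P ^ q) (Uf n - U n (k'+1))
          + ((F (Uf n) - act (P ^ q) (Uf n)) - (F (U n k') - act (P ^ q) (U n k'))) := by
      rw [hUfrec n hn, hrec n hn k']
      have hms : act (P ^ q) (Uf n - U n (k'+1))
          = act (P ^ q) (Uf n) - act (P ^ q) (U n (k'+1)) :=
        map_sub (Matrix.toEuclideanCLM (𝕜 := ℝ) (P ^ q)) _ _
      rw [hms]
      abel
    have hn1 : e (n+1) (k'+1) = ‖Uf (n+1) - U (n+1) (k'+1)‖ := rfl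
    rw [hn1, hid]
    calc ‖act (P ^ q) (Uf n - U n (k'+1))
          + ((F (Uf n) - act (P ^ q) (Uf n)) - (F (U n k') - act (P ^ q) (U n k')))‖
        ≤ ‖act (P ^ q) (Uf n - U n (k'+1))‖
          + ‖(F (Uf n) - act (P ^ q) (Uf n)) - (F (U n k') - act (P ^ q) (U n k'))‖ :=
          norm_add_le _ _
      _ ≤ β * e n (k'+1) + α * e n k' := by
          apply add_le_add
          · exact hPq _
          · exact hLTE (Uf n) (U n k')
  have hunroll : ∀ k' n, n ≤ N →
      e n (k'+1) ≤ α * ∑ i ∈ Finset.range n, β ^ i * e (n-1-i) k' := by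
    intro k' n
    induction n with
    | zero => intro _; simp [e00]
    | succ n ih =>
      intro hn1
      have hn : n < N := by omega
      have h1 := hstep n hn k'
      have h2 := ih (by omega)
      have hsum : ∑ i ∈ Finset.range (n+1), β ^ i * e (n+1-1-i) k'
          = β * ∑ i ∈ Finset.range n, β ^ i * e (n-1-i) k' + e n k' := by
        rw [Finset.sum_range_succ']
        congr 1
        · rw [Finset.mul_sum]
          apply Finset.sum_congr rfl
          intro i _
          have hidx : n + 1 - 1 - (i+1) = n - 1 - i := by omega
          rw [hidx, pow_succ]
          ring
        · simp
      rw [hsum]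
      calc e (n+1) (k'+1) ≤ β * e n (k'+1) + α * e n k' := h1
        _ ≤ β * (α * ∑ i ∈ Finset.range n, β ^ i * e (n-1-i) k') + α * e n k' := by
            have := mul_le_mul_of_nonneg_left h2 hβ0
            linarith
        _ = α * (β * ∑ i ∈ Finset.range n, β ^ i * e (n-1-i) k' + e n k') := by ring
  set S : ℝ := ∑ i ∈ Finset.range (N-1), β ^ i with hS
  have hS0 : 0 ≤ S := Finset.sum_nonneg (fun i _ => pow_nonneg hβ0 i)
  have hgeomM : ∀ k', Mx (k'+1) ≤ (α * S) * Mx k' := by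
    intro k'
    apply Finset.sup'_le
    intro j hj
    obtain ⟨hj1, hjN⟩ := Finset.mem_Icc.mp hj
    obtain ⟨jj, rfl⟩ : ∃ jj, j = jj + 1 := ⟨j - 1, by omega⟩
    have h2 := hunroll k' (jj+1) hjN
    rw [Finset.sum_range_succ] at h2
    have hz : e (jj + 1 - 1 - jj) k' = 0 := by
      have : jj + 1 - 1 - jj = 0 := by omega
      rw [this, e00]
    rw [hz, mul_zero, add_zero] at h2
    have hsum2 : ∑ i ∈ Finset.range jj, β ^ i * e (jj+1-1-i) k' ≤ S * Mx k' := by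
      calc ∑ i ∈ Finset.range jj, β ^ i * e (jj+1-1-i) k'
          ≤ ∑ i ∈ Finset.range jj, β ^ i * Mx k' := by
            apply Finset.sum_le_sum
            intro i hi
            have hiR := Finset.mem_range.mp hi
            exact mul_le_mul_of_nonneg_left
              (hle_M (jj+1-1-i) k' (by omega) (by omega)) (pow_nonneg hβ0 i)
        _ = (∑ i ∈ Finset.range jj, β ^ i) * Mx k' := by rw [Finset.sum_mul]
        _ ≤ S * Mx k' := by
            apply mul_le_mul_of_nonneg_right _ (hM0 k')
            apply Finset.sum_le_sum_of_subset_of_nonneg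
            · apply Finset.range_subset_range.mpr; omega
            · intro i _ _; exact pow_nonneg hβ0 i
    calc e (jj+1) (k'+1) ≤ α * ∑ i ∈ Finset.range jj, β ^ i * e (jj+1-1-i) k' := h2
      _ ≤ α * (S * Mx k') := mul_le_mul_of_nonneg_left hsum2 hα0
      _ = (α * S) * Mx k' := by ring
  have hgeomFinal : ∀ k', Mx (k'+1) ≤ (α * S) ^ (k'+1) * Mx 0 := by
    intro k'
    induction k' with
    | zero => simpa using hgeomM 0
    | succ k' ih =>
      calc Mx (k'+2) ≤ (α * S) * Mx (k'+1) := hgeomM (k'+1)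
        _ ≤ (α * S) * ((α * S) ^ (k'+1) * Mx 0) :=
            mul_le_mul_of_nonneg_left ih (mul_nonneg hα0 hS0)
        _ = (α * S) ^ (k'+2) * Mx 0 := by ring
  have hbinom : ∀ k' n, 1 ≤ n → n ≤ N →
      e n k' ≤ α ^ k' * ((n-1).choose k' : ℝ) * Mx 0 := by
    intro k'
    induction k' with
    | zero =>
      intro n h1 h2
      simpa using hle_M n 0 h1 h2
    | succ k' ih =>
      intro n h1 h2
      obtain ⟨nn, rfl⟩ : ∃ nn, n = nn + 1 := ⟨n - 1, by omega⟩
      have h3 := hunroll k' (nn+1) h2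
      rw [Finset.sum_range_succ] at h3
      have hz : e (nn + 1 - 1 - nn) k' = 0 := by
        have : nn + 1 - 1 - nn = 0 := by omega
        rw [this, e00]
      rw [hz, mul_zero, add_zero] at h3
      have hterm : ∀ i ∈ Finset.range nn,
          β ^ i * e (nn+1-1-i) k' ≤ α ^ k' * (((nn-1-i).choose k' : ℕ) : ℝ) * Mx 0 := by
        intro i hi
        have hiR := Finset.mem_range.mp hi
        have hidx : nn + 1 - 1 - i = nn - i := by omega
        rw [hidx]
        have h5 := ih (nn - i) (by omega) (by omega)
        have hβi : β ^ i ≤ 1 := pow_le_one₀ hβ0 hβ1.le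
        calc β ^ i * e (nn-i) k' ≤ 1 * e (nn-i) k' :=
              mul_le_mul_of_nonneg_right hβi (eNonneg _ _)
          _ = e (nn-i) k' := one_mul _
          _ ≤ α ^ k' * (((nn-i)-1).choose k' : ℝ) * Mx 0 := h5
          _ = α ^ k' * (((nn-1-i).choose k' : ℕ) : ℝ) * Mx 0 := by
              rw [show nn - i - 1 = nn - 1 - i by omega]
      have hsumN : ∑ i ∈ Finset.range nn, ((nn-1-i).choose k') = nn.choose (k'+1) := by
        rw [Finset.sum_range_reflect (fun j => j.choose k') nn]
        exact sum_range_choose_eq nn k'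
      have hsum : ∑ i ∈ Finset.range nn, β ^ i * e (nn+1-1-i) k'
          ≤ α ^ k' * (nn.choose (k'+1) : ℝ) * Mx 0 := by
        calc ∑ i ∈ Finset.range nn, β ^ i * e (nn+1-1-i) k'
            ≤ ∑ i ∈ Finset.range nn, α ^ k' * (((nn-1-i).choose k' : ℕ) : ℝ) * Mx 0 :=
              Finset.sum_le_sum hterm
          _ = α ^ k' * Mx 0 * ∑ i ∈ Finset.range nn, (((nn-1-i).choose k' : ℕ) : ℝ) := by
              rw [Finset.mul_sum]
              apply Finset.sum_congr rfl
              intro i _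
              ring
          _ = α ^ k' * Mx 0 * (nn.choose (k'+1) : ℝ) := by
              rw [← Nat.cast_sum, hsumN]
          _ = α ^ k' * (nn.choose (k'+1) : ℝ) * Mx 0 := by ring
      calc e (nn+1) (k'+1) ≤ α * ∑ i ∈ Finset.range nn, β ^ i * e (nn+1-1-i) k' := h3
        _ ≤ α * (α ^ k' * (nn.choose (k'+1) : ℝ) * Mx 0) := mul_le_mul_of_nonneg_left hsum hα0
        _ = α ^ (k'+1) * ((nn+1-1).choose (k'+1) : ℝ) * Mx 0 := by
            rw [show nn + 1 - 1 = nn from rfl]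
            ring
  have hbinomM : ∀ k', Mx (k'+1) ≤ α ^ (k'+1) * ((N-1).choose (k'+1) : ℝ) * Mx 0 := by
    intro k'
    apply Finset.sup'_le
    intro j hj
    obtain ⟨hj1, hjN⟩ := Finset.mem_Icc.mp hj
    have h1 := hbinom (k'+1) j hj1 hjN
    have h2 : ((j-1).choose (k'+1) : ℝ) ≤ ((N-1).choose (k'+1) : ℝ) := by
      exact_mod_cast Nat.choose_le_choose (k'+1) (by omega)
    calc e j (k'+1) ≤ α ^ (k'+1) * ((j-1).choose (k'+1) : ℝ) * Mx 0 := h1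
      _ ≤ α ^ (k'+1) * ((N-1).choose (k'+1) : ℝ) * Mx 0 :=
          mul_le_mul_of_nonneg_right
            (mul_le_mul_of_nonneg_left h2 (pow_nonneg hα0 _)) (hM0 0)
  have hSform : S = (1 - β ^ (N-1)) / (1 - β) := by
    rw [hS, geom_sum_eq hβ1.ne (N-1)]
    rw [show (1:ℝ) - β ^ (N-1) = -(β ^ (N-1) - 1) by ring,
        show (1:ℝ) - β = -(β - 1) by ring, neg_div_neg_eq]
  show Mx (k+1) ≤ α ^ (k+1) * min (((1 - β ^ (N-1)) / (1 - β)) ^ (k+1))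
      ((N-1).choose (k+1) : ℝ) * Mx 0
  rcases le_total (((1 - β ^ (N-1)) / (1 - β)) ^ (k+1)) (((N-1).choose (k+1) : ℝ)) with hmin | hmin
  · rw [min_eq_left hmin]
    calc Mx (k+1) ≤ (α * S) ^ (k+1) * Mx 0 := hgeomFinal k
      _ = α ^ (k+1) * ((1 - β ^ (N-1)) / (1 - β)) ^ (k+1) * Mx 0 := by
          rw [mul_pow, hSform]
  · rw [min_eq_right hmin]
    exact hbinomM k
end
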